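/- arXiv:2603.16005 — 5 statements merged into one kernel-verified Lean document; each statement's English description precedes it below -/
import Mathlib

section
/- Assume the cost c(x,y) = h(x−y) satisfies (H1)–(H3). Let Q be a Borel probability measure on ℝ^d absolutely continuous with respect to Lebesgue measure and such that Q gives zero mass to the boundary of its topological support, and let P be a Borel probability measure on ℝ^d. Fix u ∈ ℝ^d, ε ∈ (0,1) and α > 0 with TD(u;Q) = ε − α, and let v_u ∈ S^{d−1} attain the infimum in the definition of TD(u;Q), i.e., Q({x : ⟨v_u, x−u⟩ ≤ 0}) = TD(u;Q). For n ∈ ℕ set z_n = u − ∇h*(n v_u). Then for any sequence f_n of Kantorovich potentials for (Q, (1−ε)P + ε δ_{z_n}), the sequence of sets {∂^c f_n(u)} escapes to the horizon. -/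
open Filter MeasureTheory Bornology Topology Set
open scoped RealInnerProductSpace ENNReal BigOperators Classical

noncomputable section

abbrev Euc (d : ℕ) := EuclideanSpace ℝ (Fin d)

/-- The cost function `c(x,y) = h(x-y)`. -/
def cost {d : ℕ} (h : Euc d → ℝ) (x y : Euc d) : ℝ := h (x - y)

/-- The truncated cone `Cone(r, θ, z, p)`. -/
def TruncCone {d : ℕ} (r θ : ℝ) (z p : Euc d) : Set (Euc d) :=
  {x | ‖x - p‖ * ‖z‖ * Real.cos (θ / 2) ≤ ⟪z, x - p⟫ ∧ ⟪z, x - p⟫ ≤ r * ‖z‖}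

/-- (H1): `h` is strictly convex. -/
def H1 {d : ℕ} (h : Euc d → ℝ) : Prop := StrictConvexOn ℝ Set.univ h

/-- (H2): for every height `r > 0` and angle `θ ∈ (0, π)` there is `M > 0` such that for every
`p` with `‖p‖ > M` there is a truncated cone with vertex `p` on which `h` attains its maximum
at `p`. -/
def H2 {d : ℕ} (h : Euc d → ℝ) : Prop :=
  ∀ r : ℝ, 0 < r → ∀ θ : ℝ, θ ∈ Set.Ioo 0 Real.pi → ∃ M : ℝ, 0 < M ∧
    ∀ p : Euc d, M < ‖p‖ → ∃ z : Euc d, z ≠ 0 ∧ ∀ x ∈ TruncCone r θ z p, h x ≤ h p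

/-- (H3): `h(x)/‖x‖ → ∞` as `‖x‖ → ∞`. -/
def H3 {d : ℕ} (h : Euc d → ℝ) : Prop :=
  ∀ C : ℝ, ∃ R : ℝ, ∀ x : Euc d, R ≤ ‖x‖ → C * ‖x‖ ≤ h x

/-- A function `f : ℝ^d → ℝ ∪ {-∞}` is `c`-concave if it is an infimum of functions
`x ↦ c(x,y) - t` over a nonempty family `𝒯` of pairs `(y,t)`. -/
def IsCConcave {d : ℕ} (h : Euc d → ℝ) (f : Euc d → EReal) : Prop :=
  ∃ T : Set (Euc d × ℝ), T.Nonempty ∧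
    ∀ x : Euc d, f x = ⨅ p ∈ T, ((cost h x p.1 - p.2 : ℝ) : EReal)

/-- The `c`-superdifferential of `f`, as a subset of `ℝ^d × ℝ^d`. -/
def CSuperdiff {d : ℕ} (h : Euc d → ℝ) (f : Euc d → EReal) : Set (Euc d × Euc d) :=
  {q | ∀ z : Euc d, f z ≤ f q.1 + ((cost h z q.2 - cost h q.1 q.2 : ℝ) : EReal)}

/-- `∂^c f(x)`. -/
def CSuperdiffAt {d : ℕ} (h : Euc d → ℝ) (f : Euc d → EReal) (x : Euc d) : Set (Euc d) :=
  {y | (x, y) ∈ CSuperdiff h f}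

/-- `∂^c f(U) = ⋃_{x ∈ U} ∂^c f(x)`. -/
def CSuperdiffImg {d : ℕ} (h : Euc d → ℝ) (f : Euc d → EReal) (U : Set (Euc d)) :
    Set (Euc d) :=
  ⋃ x ∈ U, CSuperdiffAt h f x

/-- `dom(f) = {x : f(x) > -∞}`. -/
def edom {d : ℕ} (f : Euc d → EReal) : Set (Euc d) := {x | f x ≠ ⊥}

/-- A sequence of sets escapes to the horizon if it eventually avoids every ball
`B_R(0)`. -/
def EscapesToHorizon {α : Type*} [Norm α] (A : ℕ → Set α) : Prop :=
  ∀ R : ℝ, 0 < R → ∃ N : ℕ, ∀ n, N ≤ n → ∀ a ∈ A n, R ≤ ‖a‖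

/-- No subsequence of the sequence of sets escapes to the horizon. -/
def NoSubseqEscapes {α : Type*} [Norm α] (A : ℕ → Set α) : Prop :=
  ∀ φ : ℕ → ℕ, StrictMono φ → ¬ EscapesToHorizon fun k => A (φ k)

/-- A Kantorovich potential for `(Q, P')`: a `c`-concave function `f` whose `c`-superdifferential
is `Q`-a.e. a singleton `{T x}` and whose (a.e. defined) selection `T` pushes `Q` forward
to `P'`. -/
def IsKantorovichPotential {d : ℕ} (h : Euc d → ℝ) (Q P' : Measure (Euc d))
    (f : Euc d → EReal) : Prop :=
  IsCConcave h f ∧ ∃ T : Euc d → Euc d,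
    (∀ᵐ x ∂Q, CSuperdiffAt h f x = {T x}) ∧ Measure.map T Q = P'

/-- The Tukey depth `TD(u;Q) = inf_{v ∈ S^{d-1}} Q {x : ⟨v, x-u⟩ ≤ 0}`. -/
def tukeyDepth {d : ℕ} (Q : Measure (Euc d)) (u : Euc d) : ℝ≥0∞ :=
  ⨅ v ∈ {v : Euc d | ‖v‖ = 1}, Q {x | ⟪v, x - u⟫ ≤ 0}

/-- The set `S_ε(u)` of possible values at `u` of `c`-superdifferentials of Kantorovich
potentials from `Q` to an `ε`-contamination of `P`. -/
def contamSet {d : ℕ} (h : Euc d → ℝ) (Q P : Measure (Euc d)) (ε : ℝ) (u : Euc d) :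
    Set (Euc d) :=
  {y | ∃ μ : Measure (Euc d), IsProbabilityMeasure μ ∧ ∃ f : Euc d → EReal,
    IsKantorovichPotential h Q (ENNReal.ofReal (1 - ε) • P + ENNReal.ofReal ε • μ) f ∧
    y ∈ CSuperdiffAt h f u}

/-- Breakdown point `BP(u) = inf {ε ∈ (0,1) : S_ε(u) is unbounded}`. -/
def breakdownPoint {d : ℕ} (h : Euc d → ℝ) (Q P : Measure (Euc d)) (u : Euc d) : ℝ≥0∞ :=
  ⨅ ε ∈ {ε : ℝ | 0 < ε ∧ ε < 1 ∧ ¬ IsBounded (contamSet h Q P ε u)}, ENNReal.ofReal ε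

/-- `σ` is an optimal assignment for source points `u` and target points `x`. -/
def IsOptAssign {d n : ℕ} (h : Euc d → ℝ) (u x : Fin n → Euc d)
    (σ : Equiv.Perm (Fin n)) : Prop :=
  ∀ τ : Equiv.Perm (Fin n), ∑ i, cost h (u i) (x (σ i)) ≤ ∑ i, cost h (u i) (x (τ i))

/-- The dataset `x'` shares at least `k` atoms (with multiplicity) with the dataset `x`
of distinct points. -/
def SharesAtoms {d n : ℕ} (x x' : Fin n → Euc d) (k : ℕ) : Prop :=
  ∃ s : Finset (Fin n), k ≤ s.card ∧ ∃ g : Fin n → Fin n,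
    Set.InjOn g ↑s ∧ ∀ i ∈ s, x' (g i) = x i

/-- The set of values `x'_{σ(j)}` over datasets `x'` sharing at least `n - ℓ` atoms with `x`
and optimal assignments `σ` for `(u, x')`. -/
def fsBadSet {d n : ℕ} (h : Euc d → ℝ) (u x : Fin n → Euc d) (j : Fin n) (ℓ : ℕ) :
    Set (Euc d) :=
  {y | ∃ (x' : Fin n → Euc d) (σ : Equiv.Perm (Fin n)),
    SharesAtoms x x' (n - ℓ) ∧ IsOptAssign h u x' σ ∧ y = x' (σ j)}

/-- Finite sample (replacement) breakdown point of `T_{Q_n → P_n}(u_j)`. -/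
def finiteSampleBP {d n : ℕ} (h : Euc d → ℝ) (u x : Fin n → Euc d) (j : Fin n) : ℝ :=
  ((sInf {ℓ : ℕ | 1 ≤ ℓ ∧ ℓ ≤ n ∧ ¬ IsBounded (fsBadSet h u x j ℓ)} : ℕ) : ℝ) / n

/-- Tukey depth of `a` with respect to the empirical measure of `u_1, …, u_n`. -/
def empTD {d n : ℕ} (u : Fin n → Euc d) (a : Euc d) : ℝ :=
  ⨅ v : {v : Euc d // ‖v‖ = 1},
    ((Finset.univ.filter fun i => ⟪(v : Euc d), u i - a⟫ ≤ 0).card : ℝ) / n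

/-- Lower Tukey depth of `a` with respect to the empirical measure of `u_1, …, u_n`. -/
def empTDlt {d n : ℕ} (u : Fin n → Euc d) (a : Euc d) : ℝ :=
  ⨅ v : {v : Euc d // ‖v‖ = 1},
    ((Finset.univ.filter fun i => ⟪(v : Euc d), u i - a⟫ < 0).card : ℝ) / n

/-- Points in general position: every subset of cardinality at most `d+1` is affinely
independent. -/
def InGeneralPosition {d n : ℕ} (u : Fin n → Euc d) : Prop :=
  ∀ s : Finset (Fin n), s.card ≤ d + 1 → AffineIndependent ℝ fun i : s => u (i : Fin n)

/-- Convex conjugate `h*(y) = sup_x (⟨x,y⟩ - h(x))`. -/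
def convConj {d : ℕ} (h : Euc d → ℝ) (y : Euc d) : ℝ := ⨆ x : Euc d, (⟪x, y⟫ - h x)

/-- Topological support of a measure. -/
def measSupport {d : ℕ} (Q : Measure (Euc d)) : Set (Euc d) :=
  {x | ∀ U : Set (Euc d), IsOpen U → x ∈ U → 0 < Q U}

/-- A set `Γ ⊂ ℝ^d × ℝ^d` is `c`-cyclically monotone. -/
def CCyclMono {d : ℕ} (h : Euc d → ℝ) (Γ : Set (Euc d × Euc d)) : Prop :=
  ∀ (N : ℕ) (p : Fin N → Euc d × Euc d), (∀ i, p i ∈ Γ) →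
    ∀ τ : Equiv.Perm (Fin N),
      ∑ i, cost h (p i).1 (p i).2 ≤ ∑ i, cost h (p i).1 (p (τ i)).2

set_option maxHeartbeats 1000000
section AuxUBL
/-- the argmax of `x ↦ ⟪x,q⟫ - h x`, if it exists. -/
def maxim {d : ℕ} (h : Euc d → ℝ) (q : Euc d) : Euc d :=
  if H : ∃ x : Euc d, ∀ y : Euc d, ⟪y, q⟫ - h y ≤ ⟪x, q⟫ - h x then H.choose else 0

variable {d : ℕ} {h : Euc d → ℝ}

theorem h_continuous (h1 : StrictConvexOn ℝ Set.univ h) : Continuous h := by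
  have := (h1.convexOn).continuousOn isOpen_univ
  rw [continuousOn_univ] at this; exact this

theorem maxim_exists (h1 : StrictConvexOn ℝ Set.univ h) (hpos : ∀ x, 0 ≤ h x)
    (h3 : ∀ C : ℝ, ∃ R : ℝ, ∀ x : Euc d, R ≤ ‖x‖ → C * ‖x‖ ≤ h x) (q : Euc d) :
    ∃ x : Euc d, ∀ y : Euc d, ⟪y, q⟫ - h y ≤ ⟪x, q⟫ - h x := by
  obtain ⟨R, hR⟩ := h3 (‖q‖ + 1)
  set g : Euc d → ℝ := fun x => ⟪x, q⟫ - h x with hg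
  have hgc : Continuous g := (continuous_id.inner continuous_const).sub (h_continuous h1)
  set R' : ℝ := max (max R (h 0)) 0 with hR'
  have hout : ∀ y : Euc d, R' ≤ ‖y‖ → g y ≤ g 0 := by
    intro y hy
    have h1' : R ≤ ‖y‖ := le_trans (le_trans (le_max_left _ _) (le_max_left _ _)) hy
    have h2' : h 0 ≤ ‖y‖ := le_trans (le_trans (le_max_right _ _) (le_max_left _ _)) hy
    have hcs : ⟪y, q⟫ ≤ ‖y‖ * ‖q‖ := real_inner_le_norm y q
    have := hR y h1'
    have hg0 : g 0 = - h 0 := by simp [hg]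
    have : g y ≤ ‖y‖ * ‖q‖ - (‖q‖ + 1) * ‖y‖ := by
      simp only [hg]; linarith
    rw [hg0]; nlinarith [norm_nonneg y]
  obtain ⟨x₀, hx₀, hmax⟩ := (isCompact_closedBall (0 : Euc d) R').exists_isMaxOn
    ⟨0, by simp [hR', le_max_right]⟩ hgc.continuousOn
  refine ⟨x₀, fun y => ?_⟩
  by_cases hy : y ∈ Metric.closedBall (0 : Euc d) R'
  · exact hmax hy
  · have : R' ≤ ‖y‖ := by
      simp only [Metric.mem_closedBall, dist_zero_right, not_le] at hy
      exact hy.le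
    exact le_trans (hout y this) (hmax (by simp [hR', le_max_right]))

theorem maxim_spec (h1 : StrictConvexOn ℝ Set.univ h) (hpos : ∀ x, 0 ≤ h x)
    (h3 : ∀ C : ℝ, ∃ R : ℝ, ∀ x : Euc d, R ≤ ‖x‖ → C * ‖x‖ ≤ h x) (q : Euc d) :
    ∀ y : Euc d, ⟪y, q⟫ - h y ≤ ⟪maxim h q, q⟫ - h (maxim h q) := by
  have H := maxim_exists h1 hpos h3 q
  rw [maxim, dif_pos H]
  exact H.choose_spec

theorem maxim_unique (h1 : StrictConvexOn ℝ Set.univ h) {q x₁ x₂ : Euc d}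
    (hx₁ : ∀ y : Euc d, ⟪y, q⟫ - h y ≤ ⟪x₁, q⟫ - h x₁)
    (hx₂ : ∀ y : Euc d, ⟪y, q⟫ - h y ≤ ⟪x₂, q⟫ - h x₂) : x₁ = x₂ := by
  by_contra hne
  have heq : ⟪x₁, q⟫ - h x₁ = ⟪x₂, q⟫ - h x₂ := le_antisymm (hx₂ x₁) (hx₁ x₂)
  have hmid := h1.2 (Set.mem_univ x₁) (Set.mem_univ x₂) hne
    (by norm_num : (0:ℝ) < 1/2) (by norm_num : (0:ℝ) < 1/2) (by norm_num)
  have hinner : ⟪(1/2 : ℝ) • x₁ + (1/2 : ℝ) • x₂, q⟫ = (1/2) * ⟪x₁, q⟫ + (1/2) * ⟪x₂, q⟫ := by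
    rw [inner_add_left, real_inner_smul_left, real_inner_smul_left]
  have := hx₁ ((1/2 : ℝ) • x₁ + (1/2 : ℝ) • x₂)
  rw [hinner] at this
  rw [smul_eq_mul, smul_eq_mul] at hmid
  linarith
variable {d : ℕ} {h : Euc d → ℝ} {q : Euc d} (m : Euc d → Euc d)

theorem convConj_eq (hm : ∀ q y : Euc d, ⟪y, q⟫ - h y ≤ ⟪m q, q⟫ - h (m q)) (q : Euc d) :
    convConj h q = ⟪m q, q⟫ - h (m q) := by
  refine le_antisymm (ciSup_le fun x => hm q x) ?_
  exact le_ciSup ⟨⟪m q, q⟫ - h (m q), by rintro r ⟨x, rfl⟩; exact hm q x⟩ (m q)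

theorem maxim_bound (hpos : ∀ x, 0 ≤ h x)
    (h3 : ∀ C : ℝ, ∃ R : ℝ, ∀ x : Euc d, R ≤ ‖x‖ → C * ‖x‖ ≤ h x)
    (hm : ∀ q y : Euc d, ⟪y, q⟫ - h y ≤ ⟪m q, q⟫ - h (m q)) (q : Euc d) :
    ∃ C : ℝ, ∀ q' : Euc d, ‖q' - q‖ ≤ 1 → ‖m q'‖ ≤ C := by
  obtain ⟨R, hR⟩ := h3 (‖q‖ + 2)
  refine ⟨max R (h 0), fun q' hq' => ?_⟩
  by_contra hC
  push_neg at hC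
  have h1' : R ≤ ‖m q'‖ := le_trans (le_max_left _ _) hC.le
  have h2' : h 0 < ‖m q'‖ := lt_of_le_of_lt (le_max_right _ _) hC
  have hkey := hm q' 0
  simp only [inner_zero_left, zero_sub] at hkey
  -- h (m q') ≤ ⟪m q', q'⟫ + h 0
  have hcs : ⟪m q', q'⟫ ≤ ‖m q'‖ * ‖q'‖ := real_inner_le_norm _ _
  have hq'n : ‖q'‖ ≤ ‖q‖ + 1 := by
    calc ‖q'‖ = ‖q' - q + q‖ := by rw [sub_add_cancel]
    _ ≤ ‖q' - q‖ + ‖q‖ := norm_add_le _ _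
    _ ≤ ‖q‖ + 1 := by linarith
  have := hR (m q') h1'
  nlinarith [norm_nonneg (m q')]

theorem maxim_subgrad (hm : ∀ q y : Euc d, ⟪y, q⟫ - h y ≤ ⟪m q, q⟫ - h (m q))
    (q w : Euc d) : h (m q) + ⟪w, q⟫ ≤ h (m q + w) := by
  have := hm q (m q + w)
  rw [inner_add_left] at this
  linarith

theorem conj_sub_le (hm : ∀ q y : Euc d, ⟪y, q⟫ - h y ≤ ⟪m q, q⟫ - h (m q))
    (q q' : Euc d) : convConj h q' - convConj h q ≤ ⟪m q', q' - q⟫ := by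
  rw [convConj_eq m hm, convConj_eq m hm, inner_sub_right]
  have := hm q (m q')
  linarith

theorem conj_sub_ge (hm : ∀ q y : Euc d, ⟪y, q⟫ - h y ≤ ⟪m q, q⟫ - h (m q))
    (q q' : Euc d) : ⟪m q, q' - q⟫ ≤ convConj h q' - convConj h q := by
  rw [convConj_eq m hm, convConj_eq m hm, inner_sub_right]
  have := hm q' (m q)
  linarith

theorem maxim_continuousAt (h1 : StrictConvexOn ℝ Set.univ h) (hpos : ∀ x, 0 ≤ h x)
    (h3 : ∀ C : ℝ, ∃ R : ℝ, ∀ x : Euc d, R ≤ ‖x‖ → C * ‖x‖ ≤ h x)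
    (hm : ∀ q y : Euc d, ⟪y, q⟫ - h y ≤ ⟪m q, q⟫ - h (m q)) (q : Euc d) :
    ContinuousAt m q := by
  have hcont : Continuous h := by
    have := (h1.convexOn).continuousOn isOpen_univ
    rw [continuousOn_univ] at this; exact this
  rw [ContinuousAt, tendsto_iff_seq_tendsto]
  intro qs hqs
  by_contra hnot
  rw [Metric.tendsto_atTop] at hnot
  push_neg at hnot
  obtain ⟨ε, hε, hfreq⟩ := hnot
  have hfreq' : ∃ᶠ k in atTop, ε ≤ dist (m (qs k)) (m q) := by
    rw [frequently_atTop]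
    intro N; obtain ⟨k, hk1, hk2⟩ := hfreq N; exact ⟨k, hk1, hk2⟩
  obtain ⟨φ, hφmono, hφ⟩ := Filter.extraction_of_frequently_atTop hfreq'
  have hqsφ : Tendsto (fun j => qs (φ j)) atTop (𝓝 q) := hqs.comp hφmono.tendsto_atTop
  obtain ⟨C, hC⟩ := maxim_bound m hpos h3 hm q
  have hev : ∀ᶠ j in atTop, ‖qs (φ j) - q‖ ≤ 1 := by
    have := hqsφ.sub tendsto_const_nhds (g := fun _ => q)
    rw [show q - q = 0 by simp] at this
    have := this.norm
    rw [norm_zero] at this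
    exact (this.eventually (eventually_le_nhds one_pos)).mono fun j hj => hj
  obtain ⟨J, hJ⟩ := hev.exists_forall_of_atTop
  set y : ℕ → Euc d := fun j => m (qs (φ (J + j))) with hy
  have hyK : ∀ j, y j ∈ Metric.closedBall (0 : Euc d) |C| := by
    intro j
    simp only [Metric.mem_closedBall, dist_zero_right]
    exact le_trans (hC _ (hJ (J + j) (Nat.le_add_right _ _))) (le_abs_self C)
  obtain ⟨a, haK, ψ, hψmono, hψ⟩ :=
    (isCompact_closedBall (0 : Euc d) |C|).tendsto_subseq hyK
  have hq2 : Tendsto (fun i => qs (φ (J + ψ i))) atTop (𝓝 q) := by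
    apply hqs.comp
    apply StrictMono.tendsto_atTop
    intro i j hij
    exact hφmono (Nat.add_lt_add_left (hψmono hij) J)
  -- a is a maximizer for q
  have hamax : ∀ w : Euc d, ⟪w, q⟫ - h w ≤ ⟪a, q⟫ - h a := by
    intro w
    have hle : ∀ i, ⟪w, qs (φ (J + ψ i))⟫ - h w ≤
        ⟪y (ψ i), qs (φ (J + ψ i))⟫ - h (y (ψ i)) := fun i => hm _ w
    have hy2 : Tendsto (fun i => y (ψ i)) atTop (𝓝 a) := hψ
    have hL : Tendsto (fun i => ⟪w, qs (φ (J + ψ i))⟫ - h w) atTop (𝓝 (⟪w, q⟫ - h w)) :=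
      (Filter.Tendsto.inner tendsto_const_nhds hq2).sub tendsto_const_nhds
    have hR : Tendsto (fun i => ⟪y (ψ i), qs (φ (J + ψ i))⟫ - h (y (ψ i))) atTop
        (𝓝 (⟪a, q⟫ - h a)) :=
      (Filter.Tendsto.inner hy2 hq2).sub ((hcont.tendsto a).comp hy2)
    exact le_of_tendsto_of_tendsto' hL hR hle
  have haeq : a = m q := by
    by_contra hne
    have heq : ⟪a, q⟫ - h a = ⟪m q, q⟫ - h (m q) := le_antisymm (hm q a) (hamax (m q))
    have hmid := h1.2 (Set.mem_univ a) (Set.mem_univ (m q)) hne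
      (by norm_num : (0:ℝ) < 1/2) (by norm_num : (0:ℝ) < 1/2) (by norm_num)
    have hinner : ⟪(1/2 : ℝ) • a + (1/2 : ℝ) • m q, q⟫ = (1/2) * ⟪a, q⟫ + (1/2) * ⟪m q, q⟫ := by
      rw [inner_add_left, real_inner_smul_left, real_inner_smul_left]
    have := hamax ((1/2 : ℝ) • a + (1/2 : ℝ) • m q)
    rw [hinner] at this
    rw [smul_eq_mul, smul_eq_mul] at hmid
    linarith
  have hdist : Tendsto (fun i => dist (y (ψ i)) (m q)) atTop (𝓝 0) := by
    rw [← haeq]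
    exact tendsto_iff_dist_tendsto_zero.mp hψ
  have : ε ≤ (0 : ℝ) := ge_of_tendsto hdist (Eventually.of_forall fun i => hφ (J + ψ i))
  linarith

theorem maxim_hasGradient (h1 : StrictConvexOn ℝ Set.univ h) (hpos : ∀ x, 0 ≤ h x)
    (h3 : ∀ C : ℝ, ∃ R : ℝ, ∀ x : Euc d, R ≤ ‖x‖ → C * ‖x‖ ≤ h x)
    (hm : ∀ q y : Euc d, ⟪y, q⟫ - h y ≤ ⟪m q, q⟫ - h (m q)) (q : Euc d) :
    HasGradientAt (convConj h) (m q) q := by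
  rw [hasGradientAt_iff_hasFDerivAt, hasFDerivAt_iff_isLittleO_nhds_zero]
  rw [Asymptotics.isLittleO_iff]
  intro c hc
  have hcont := maxim_continuousAt m h1 hpos h3 hm q
  have hev : ∀ᶠ w : Euc d in 𝓝 0, ‖m (q + w) - m q‖ ≤ c := by
    have ht : Tendsto (fun w : Euc d => ‖m (q + w) - m q‖) (𝓝 0) (𝓝 0) := by
      have h1t : Tendsto (fun w : Euc d => q + w) (𝓝 0) (𝓝 q) := by
        simpa using (show Continuous (fun w : Euc d => q + w) from continuous_const.add continuous_id).tendsto (0 : Euc d)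
      have h2t : Tendsto (fun w : Euc d => m (q + w)) (𝓝 0) (𝓝 (m q)) :=
        hcont.tendsto.comp h1t
      have h3t : Tendsto (fun w : Euc d => m (q + w) - m q) (𝓝 0) (𝓝 (m q - m q)) :=
        h2t.sub tendsto_const_nhds
      rw [sub_self] at h3t
      simpa using h3t.norm
    exact ht.eventually (eventually_le_nhds hc)
  filter_upwards [hev] with w hw
  have hlow := conj_sub_ge m hm q (q + w)
  have hhigh := conj_sub_le m hm q (q + w)
  rw [add_sub_cancel_left] at hlow hhigh
  have hcs : ⟪m (q + w) - m q, w⟫ ≤ ‖m (q + w) - m q‖ * ‖w‖ := real_inner_le_norm _ _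
  rw [inner_sub_left] at hcs
  have htd : (InnerProductSpace.toDual ℝ (Euc d)) (m q) w = ⟪m q, w⟫ := rfl
  rw [Real.norm_eq_abs, abs_le]
  constructor
  · have : 0 ≤ convConj h (q + w) - convConj h q - ⟪m q, w⟫ := by linarith
    simp only [htd]
    nlinarith [norm_nonneg w, mul_nonneg hc.le (norm_nonneg w)]
  · simp only [htd]
    nlinarith [norm_nonneg w, mul_le_mul_of_nonneg_right hw (norm_nonneg w)]

theorem grad_subgrad {d : ℕ} {h : Euc d → ℝ} (h1 : StrictConvexOn ℝ Set.univ h)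
    (hpos : ∀ x, 0 ≤ h x)
    (h3 : ∀ C : ℝ, ∃ R : ℝ, ∀ x : Euc d, R ≤ ‖x‖ → C * ‖x‖ ≤ h x) (q w : Euc d) :
    h (gradient (convConj h) q) + ⟪w, q⟫ ≤ h (gradient (convConj h) q + w) := by
  have hm : ∀ q y : Euc d, ⟪y, q⟫ - h y ≤ ⟪maxim h q, q⟫ - h (maxim h q) :=
    fun q => maxim_spec h1 hpos h3 q
  have hg : gradient (convConj h) q = maxim h q :=
    (maxim_hasGradient (maxim h) h1 hpos h3 hm q).gradient
  rw [hg]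
  exact maxim_subgrad (maxim h) hm q w

end AuxUBL

/-- upper bound lemma: with `TD(u;Q) = ε - α`, `v_u` attaining the Tukey depth
infimum, and `z_n = u - ∇h*(n v_u)`, for any Kantorovich potentials `f_n` for
`(Q, (1-ε)P + ε δ_{z_n})`, the sets `{∂^c f_n(u)}` escape to the horizon. -/
theorem upper_bound_lemma (d : ℕ) (hd : 1 ≤ d) (h : Euc d → ℝ)
    (hpos : ∀ x, 0 ≤ h x) (h1 : H1 h) (h2 : H2 h) (h3 : H3 h)
    (Q P : Measure (Euc d)) [IsProbabilityMeasure Q] [IsProbabilityMeasure P]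
    (hQ : Q ≪ volume) (hbd : Q (frontier (measSupport Q)) = 0)
    (u : Euc d) (ε α : ℝ) (hε : ε ∈ Set.Ioo (0 : ℝ) 1) (hα : 0 < α)
    (hTD : tukeyDepth Q u = ENNReal.ofReal (ε - α))
    (v : Euc d) (hv : ‖v‖ = 1)
    (hvatt : Q {x : Euc d | ⟪v, x - u⟫ ≤ 0} = tukeyDepth Q u)
    (z : ℕ → Euc d) (hz : ∀ n : ℕ, z n = u - gradient (convConj h) ((n : ℝ) • v))
    (f : ℕ → Euc d → EReal)
    (hf : ∀ n : ℕ, IsKantorovichPotential h Q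
      (ENNReal.ofReal (1 - ε) • P + ENNReal.ofReal ε • Measure.dirac (z n)) (f n)) :
    EscapesToHorizon fun n => CSuperdiffAt h (f n) u := by
  obtain ⟨hε0, hε1⟩ := hε
  have hcont : Continuous h := by
    have := (h1.convexOn).continuousOn isOpen_univ
    rw [continuousOn_univ] at this; exact this
  -- the halfspace has measure < ofReal ε
  have hH0 : Q {x : Euc d | ⟪v, x - u⟫ ≤ 0} = ENNReal.ofReal (ε - α) := hvatt.trans hTD
  have hlt : Q {x : Euc d | ⟪v, x - u⟫ ≤ 0} < ENNReal.ofReal ε := by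
    rw [hH0]
    exact (ENNReal.ofReal_lt_ofReal_iff hε0).mpr (by linarith)
  obtain ⟨c, hc1, hc2⟩ := exists_between hlt
  -- choose δ > 0 with Q {⟪v, x-u⟫ ≤ δ} < c
  have hδex : ∃ δ : ℝ, 0 < δ ∧ Q {x : Euc d | ⟪v, x - u⟫ ≤ δ} < c := by
    set S : ℕ → Set (Euc d) := fun m => {x | ⟪v, x - u⟫ ≤ 1 / (m + 1)} with hS
    have hScont : Continuous fun x : Euc d => ⟪v, x - u⟫ :=
      Continuous.inner continuous_const (continuous_id.sub continuous_const)
    have hSm : ∀ m, MeasurableSet (S m) := fun m =>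
      measurableSet_le hScont.measurable measurable_const
    have hSanti : Antitone S := by
      intro m m' hmm' x hx
      simp only [hS, Set.mem_setOf_eq] at hx ⊢
      refine le_trans hx ?_
      have hcast : ((m : ℝ) + 1) ≤ ((m' : ℝ) + 1) := by
        have : (m : ℝ) ≤ m' := Nat.cast_le.mpr hmm'
        linarith
      exact one_div_le_one_div_of_le (by positivity) hcast
    have hSint : ⋂ m, S m = {x : Euc d | ⟪v, x - u⟫ ≤ 0} := by
      ext x
      simp only [Set.mem_iInter, hS, Set.mem_setOf_eq]
      constructor
      · intro hall
        by_contra hpos'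
        push_neg at hpos'
        obtain ⟨m, hm⟩ := exists_nat_one_div_lt hpos'
        exact absurd (hall m) (by push_neg; exact hm)
      · intro h0 m
        exact le_trans h0 (by positivity)
    have htend : Tendsto (Q ∘ S) atTop (𝓝 (Q {x : Euc d | ⟪v, x - u⟫ ≤ 0})) := by
      rw [← hSint]
      exact tendsto_measure_iInter_atTop (fun m => (hSm m).nullMeasurableSet) hSanti
        ⟨0, measure_ne_top Q _⟩
    have hev : ∀ᶠ m in atTop, Q (S m) < c := htend.eventually_lt_const hc1
    obtain ⟨m, hm⟩ := hev.exists
    exact ⟨1 / (m + 1), by positivity, hm⟩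
  obtain ⟨δ, hδ0, hδQ⟩ := hδex
  -- choose K with Q (closedBall 0 K)ᶜ < c' where c' = ofReal ε - c
  have hKex : ∃ K : ℝ, 0 < K ∧ Q (Metric.closedBall (0 : Euc d) K)ᶜ < ENNReal.ofReal ε - c := by
    set S : ℕ → Set (Euc d) := fun m => (Metric.closedBall (0 : Euc d) (m + 1))ᶜ with hS
    have hSm : ∀ m, MeasurableSet (S m) := fun m =>
      (Metric.isClosed_closedBall.measurableSet).compl
    have hSanti : Antitone S := by
      intro m m' hmm' x hx
      simp only [hS, Set.mem_compl_iff, Metric.mem_closedBall, dist_zero_right, not_le] at hx ⊢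
      refine lt_of_le_of_lt ?_ hx
      have : (m : ℝ) ≤ m' := Nat.cast_le.mpr hmm'
      linarith
    have hSint : ⋂ m, S m = (∅ : Set (Euc d)) := by
      ext x
      simp only [Set.mem_iInter, hS, Set.mem_compl_iff, Metric.mem_closedBall,
        dist_zero_right, not_le, Set.mem_empty_iff_false, iff_false, not_forall, not_lt]
      obtain ⟨m, hm⟩ := exists_nat_ge ‖x‖
      exact ⟨m, by linarith⟩
    have hpos' : (0 : ℝ≥0∞) < ENNReal.ofReal ε - c := tsub_pos_iff_lt.mpr hc2
    have htend : Tendsto (Q ∘ S) atTop (𝓝 0) := by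
      have := tendsto_measure_iInter_atTop (fun m => (hSm m).nullMeasurableSet) hSanti
        ⟨0, measure_ne_top Q _⟩
      rwa [hSint, measure_empty] at this
    have hev : ∀ᶠ m in atTop, Q (S m) < ENNReal.ofReal ε - c := htend.eventually_lt_const hpos'
    obtain ⟨m, hm⟩ := hev.exists
    exact ⟨m + 1, by positivity, hm⟩
  obtain ⟨K, hK0, hKQ⟩ := hKex
  intro R hR
  -- bound for h on the relevant compact set
  obtain ⟨B, hB⟩ := (isCompact_closedBall (0 : Euc d) (K + R)).exists_bound_of_continuousOn
    hcont.continuousOn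
  have hB0 : 0 ≤ B := le_trans (norm_nonneg _) (hB 0 (by simp [Metric.mem_closedBall]; positivity))
  obtain ⟨N, hN⟩ := exists_nat_gt (B / δ)
  have hNB : B < (N : ℝ) * δ := by
    rw [div_lt_iff₀ hδ0] at hN; linarith
  refine ⟨N, fun n hn y hy => ?_⟩
  by_contra hyR
  push_neg at hyR
  -- unpack the Kantorovich potential
  obtain ⟨hfcc, T, hT1, hT2⟩ := hf n
  -- f n is never ⊤
  have htop : ∀ w : Euc d, f n w ≠ ⊤ := by
    obtain ⟨S, ⟨p0, hp0⟩, hfx⟩ := hfcc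
    intro w hw
    have : f n w ≤ ((cost h w p0.1 - p0.2 : ℝ) : EReal) := by
      rw [hfx w]
      exact iInf₂_le p0 hp0
    rw [hw] at this
    exact (EReal.coe_ne_top _) (top_le_iff.mp this)
  -- a point x in the superdifferential domain has f n x ≠ ⊥
  have hne_bot : ∀ x₀ y₀ : Euc d, (x₀, y₀) ∈ CSuperdiff h (f n) → f n x₀ ≠ ⊥ := by
    intro x₀ y₀ hxy hbot
    have hall : ∀ w, f n w = ⊥ := by
      intro w
      have := hxy w
      rw [hbot, EReal.bot_add] at this
      exact le_bot_iff.mp this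
    have : (MeasureTheory.ae Q).NeBot := ae_neBot.mpr (IsProbabilityMeasure.ne_zero Q)
    obtain ⟨x, hx⟩ := hT1.exists
    set e : Euc d := EuclideanSpace.single (⟨0, hd⟩ : Fin d) (1 : ℝ) with he
    have hene : e ≠ 0 := by
      intro h0
      have h1e : ‖e‖ = 1 := by rw [he, EuclideanSpace.norm_single]; norm_num
      rw [h0, norm_zero] at h1e; norm_num at h1e
    have hmem : T x + e ∈ CSuperdiffAt h (f n) x := by
      intro w; rw [hall w]; exact bot_le
    rw [hx] at hmem
    simp only [Set.mem_singleton_iff] at hmem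
    exact hene (by simpa using congrArg (· - T x) hmem)
  -- T is a.e.-measurable
  have hTmeas : AEMeasurable T Q := by
    by_contra hTm
    rw [Measure.map_of_not_aemeasurable hTm] at hT2
    have := congrArg (fun μ : Measure (Euc d) => μ Set.univ) hT2
    simp only [Measure.coe_zero, Pi.zero_apply, Measure.add_apply, Measure.smul_apply,
      smul_eq_mul, measure_univ, mul_one] at this
    have h2 : (0 : ℝ≥0∞) < ENNReal.ofReal (1 - ε) + ENNReal.ofReal ε := by
      have : (0 : ℝ≥0∞) < ENNReal.ofReal ε := ENNReal.ofReal_pos.mpr hε0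
      exact lt_of_lt_of_le this le_add_self
    rw [← this] at h2
    exact lt_irrefl _ h2
  -- the preimage of {z n} has measure ≥ ε
  have hA : ENNReal.ofReal ε ≤ Q (T ⁻¹' {z n}) := by
    have := Measure.map_apply_of_aemeasurable hTmeas (measurableSet_singleton (z n))
    rw [hT2] at this
    rw [← this]
    simp only [Measure.add_apply, Measure.smul_apply, smul_eq_mul]
    have hd1 : Measure.dirac (z n) {z n} = 1 :=
      Measure.dirac_apply_of_mem (Set.mem_singleton _)
    rw [hd1, mul_one]
    exact le_add_self
  -- the a.e. set
  set E : Set (Euc d) := {x | CSuperdiffAt h (f n) x = {T x}} with hE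
  have hEc : Q Eᶜ = 0 := by
    rw [hE]
    exact hT1
  -- the good region G
  set G : Set (Euc d) := {x : Euc d | δ < ⟪v, x - u⟫} ∩ Metric.closedBall 0 K with hG
  have hGc : Q Gᶜ < ENNReal.ofReal ε := by
    have hsub : Gᶜ ⊆ {x : Euc d | ⟪v, x - u⟫ ≤ δ} ∪ (Metric.closedBall (0 : Euc d) K)ᶜ := by
      intro x hx
      rw [hG, Set.compl_inter] at hx
      rcases hx with hx | hx
      · left; simpa using hx
      · right; exact hx
    calc Q Gᶜ ≤ Q ({x : Euc d | ⟪v, x - u⟫ ≤ δ} ∪ (Metric.closedBall (0 : Euc d) K)ᶜ) :=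
          measure_mono hsub
    _ ≤ Q {x : Euc d | ⟪v, x - u⟫ ≤ δ} + Q (Metric.closedBall (0 : Euc d) K)ᶜ :=
          measure_union_le _ _
    _ < c + (ENNReal.ofReal ε - c) := ENNReal.add_lt_add hδQ hKQ
    _ = ENNReal.ofReal ε := by rw [add_comm, tsub_add_cancel_of_le hc2.le]
  -- find a good point x
  have hmain : Q (T ⁻¹' {z n} ∩ E ∩ G) ≠ 0 := by
    intro h0
    have h1' : Q (T ⁻¹' {z n} ∩ E) ≤ Q Gᶜ := by
      calc Q (T ⁻¹' {z n} ∩ E) ≤ Q ((T ⁻¹' {z n} ∩ E) ∩ G) + Q ((T ⁻¹' {z n} ∩ E) \ G) :=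
            measure_le_inter_add_diff _ _ _
      _ = Q ((T ⁻¹' {z n} ∩ E) \ G) := by rw [h0, zero_add]
      _ ≤ Q Gᶜ := measure_mono (fun x hx => hx.2)
    have h2' : Q (T ⁻¹' {z n}) ≤ Q (T ⁻¹' {z n} ∩ E) := by
      calc Q (T ⁻¹' {z n}) ≤ Q (T ⁻¹' {z n} ∩ E) + Q (T ⁻¹' {z n} \ E) :=
            measure_le_inter_add_diff _ _ _
      _ ≤ Q (T ⁻¹' {z n} ∩ E) + Q Eᶜ := by
            gcongr
            exact fun x hx => hx.2
      _ = Q (T ⁻¹' {z n} ∩ E) := by rw [hEc, add_zero]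
    exact absurd (lt_of_le_of_lt (hA.trans (h2'.trans h1')) hGc) (lt_irrefl _)
  obtain ⟨x, hx⟩ := nonempty_of_measure_ne_zero hmain
  obtain ⟨⟨hx1, hx2⟩, hx3, hx4⟩ := hx
  rw [Set.mem_preimage, Set.mem_singleton_iff] at hx1
  rw [hE, Set.mem_setOf_eq] at hx2
  rw [Set.mem_setOf_eq] at hx3
  rw [Metric.mem_closedBall, dist_zero_right] at hx4
  -- (x, z n) ∈ ∂^c f n
  have hxz : (x, z n) ∈ CSuperdiff h (f n) := by
    have : z n ∈ CSuperdiffAt h (f n) x := by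
      rw [hx2, hx1]
      exact Set.mem_singleton _
    exact this
  -- (u, y) ∈ ∂^c f n
  have huy : (u, y) ∈ CSuperdiff h (f n) := hy
  -- extract real values
  have hfu : f n u ≠ ⊥ := hne_bot u y huy
  have hfx : f n x ≠ ⊥ := hne_bot x (z n) hxz
  set a : ℝ := (f n u).toReal with ha
  set b : ℝ := (f n x).toReal with hb
  have hfa : f n u = (a : EReal) := (EReal.coe_toReal (htop u) hfu).symm
  have hfb : f n x = (b : EReal) := (EReal.coe_toReal (htop x) hfx).symm
  have hineq1 : b ≤ a + (cost h x y - cost h u y) := by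
    have := huy x
    rw [hfa, hfb, ← EReal.coe_add] at this
    exact_mod_cast this
  have hineq2 : a ≤ b + (cost h u (z n) - cost h x (z n)) := by
    have := hxz u
    rw [hfa, hfb, ← EReal.coe_add] at this
    exact_mod_cast this
  -- gradient lower bound
  have hsub := grad_subgrad h1 hpos h3 ((n : ℝ) • v) (x - u)
  have hzn : u - z n = gradient (convConj h) ((n : ℝ) • v) := by
    rw [hz n]; abel
  have hxzn : x - z n = gradient (convConj h) ((n : ℝ) • v) + (x - u) := by
    rw [hz n]; abel
  have hinner : ⟪x - u, (n : ℝ) • v⟫ = (n : ℝ) * ⟪v, x - u⟫ := by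
    rw [real_inner_smul_right, real_inner_comm]
  have hlow : (n : ℝ) * δ ≤ cost h x (z n) - cost h u (z n) := by
    have h1'' : h (u - z n) + (n : ℝ) * ⟪v, x - u⟫ ≤ h (x - z n) := by
      rw [hzn, hxzn, ← hinner]
      exact hsub
    have h2'' : (n : ℝ) * δ ≤ (n : ℝ) * ⟪v, x - u⟫ :=
      mul_le_mul_of_nonneg_left hx3.le (Nat.cast_nonneg n)
    simp only [cost]
    linarith
  -- upper bound
  have hup : cost h x y - cost h u y ≤ B := by
    have hxy : ‖x - y‖ ≤ K + R := by
      calc ‖x - y‖ ≤ ‖x‖ + ‖y‖ := norm_sub_le _ _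
      _ ≤ K + R := by linarith
    have := hB (x - y) (by rwa [Metric.mem_closedBall, dist_zero_right])
    have h1'' : h (x - y) ≤ B := le_trans (le_abs_self _) (by rwa [Real.norm_eq_abs] at this)
    have h2'' : 0 ≤ h (u - y) := hpos _
    simp only [cost]
    linarith
  -- contradiction
  have hNn : (N : ℝ) * δ ≤ (n : ℝ) * δ := by
    have : (N : ℝ) ≤ (n : ℝ) := Nat.cast_le.mpr hn
    exact mul_le_mul_of_nonneg_right this hδ0.le
  linarith

end
end

section
/- Assume the cost c(x,y) = h(x−y) satisfies (H1)–(H3). Let u_1,…,u_n ∈ ℝ^d be distinct and x_1,…,x_n ∈ ℝ^d be distinct, with Q_n the empirical measure of u_1,…,u_n. Then for every i ∈ {1,…,n}, the finite sample breakdown point of T_{Q_n→P_n}(u_i) is at least TD^−(u_i;Q_n) + 1/n. -/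
open Filter MeasureTheory Bornology Topology Set
open scoped RealInnerProductSpace ENNReal BigOperators Classical

noncomputable section

set_option maxHeartbeats 1000000

set_option maxHeartbeats 1000000 in
lemma exists_subgradient {d : ℕ} (h : Euc d → ℝ) (hconv : ConvexOn ℝ Set.univ h) (P : Euc d) :
    ∃ g : Euc d, ∀ x, h P + ⟪g, x - P⟫ ≤ h x := by
  have hcont : Continuous h := by
    rw [← continuousOn_univ]; exact hconv.continuousOn isOpen_univ
  set S : Set (Euc d × ℝ) := {q | h q.1 < q.2} with hS
  have hSopen : IsOpen S := isOpen_lt (hcont.comp continuous_fst) continuous_snd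
  have hSconv : Convex ℝ S := by
    intro q1 hq1 q2 hq2 a b ha hb hab
    simp only [hS, Set.mem_setOf_eq] at *
    calc h (a • q1.1 + b • q2.1) ≤ a * h q1.1 + b * h q2.1 :=
          hconv.2 (Set.mem_univ _) (Set.mem_univ _) ha hb hab
      _ < a * q1.2 + b * q2.2 := by
          rcases eq_or_lt_of_le ha with rfl | ha'
          · simp at hab; subst hab; simpa using hq2
          · rcases eq_or_lt_of_le hb with rfl | hb'
            · simp at hab; subst hab; simpa using hq1
            · exact add_lt_add (by nlinarith) (by nlinarith)
      _ = (a • q1 + b • q2).2 := by simp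
  have hPnot : (P, h P) ∉ S := by simp [hS]
  obtain ⟨f, hf⟩ := geometric_hahn_banach_open_point hSconv hSopen hPnot
  set β : ℝ := f (0, 1) with hβ
  have hdecomp : ∀ (x : Euc d) (t : ℝ), f (x, t) = f (x, 0) + t * β := by
    intro x t
    have hxt : (x, t) = (x, (0:ℝ)) + t • ((0:Euc d), (1:ℝ)) := by
      simp [Prod.ext_iff]
    rw [hxt, map_add, ContinuousLinearMap.map_smul]
    simp [hβ]
  have hβneg : β < 0 := by
    have := hf (P, h P + 1) (by simp [hS])
    rw [hdecomp P (h P + 1), hdecomp P (h P)] at this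
    nlinarith
  have hβne : β ≠ 0 := ne_of_lt hβneg
  have hmain : ∀ x : Euc d, f (x, 0) + h x * β ≤ f (P, 0) + h P * β := by
    intro x
    by_contra hcon
    push_neg at hcon
    set ε : ℝ := (f (P,0) + h P * β - (f (x,0) + h x * β)) / β with hε
    have hεβ : ε * β = f (P,0) + h P * β - (f (x,0) + h x * β) := div_mul_cancel₀ _ hβne
    have hεpos : 0 < ε := div_pos_of_neg_of_neg (by linarith) hβneg
    have := hf (x, h x + ε) (by simp [hS, hεpos])
    rw [hdecomp x (h x + ε), hdecomp P (h P)] at this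
    nlinarith
  refine ⟨(-β⁻¹) • (InnerProductSpace.toDual ℝ (Euc d)).symm
    (f.comp (ContinuousLinearMap.inl ℝ (Euc d) ℝ)), fun x => ?_⟩
  have h1 : ⟪(-β⁻¹) • (InnerProductSpace.toDual ℝ (Euc d)).symm
      (f.comp (ContinuousLinearMap.inl ℝ (Euc d) ℝ)), x - P⟫
      = (-β⁻¹) * (f (x,0) - f (P,0)) := by
    rw [real_inner_smul_left, inner_sub_right,
      InnerProductSpace.toDual_symm_apply, InnerProductSpace.toDual_symm_apply]
    rfl
  rw [h1]
  have h2 := hmain x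
  have hβinv : β⁻¹ < 0 := inv_neg''.2 hβneg
  have h3 : β * β⁻¹ = 1 := mul_inv_cancel₀ hβne
  have key := mul_nonneg (le_of_lt (neg_pos.2 hβinv)) (sub_nonneg.2 h2)
  have expand : -β⁻¹ * ((f (P,0) + h P * β) - (f (x,0) + h x * β))
      = h x - h P - (-β⁻¹ * (f (x,0) - f (P,0))) := by
    field_simp
    ring
  rw [expand] at key
  linarith


set_option maxHeartbeats 1000000 in
lemma norm_le_of_cap {E : Type*} [NormedAddCommGroup E] [InnerProductSpace ℝ E]
    (g δh : E) (hδh : ‖δh‖ = 1) (c' D A0 : ℝ) (hc' : 0 < c') (hc1 : c' ≤ 1) (hD : 0 ≤ D) (hA0 : 0 ≤ A0)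
    (hαlow : -A0 ≤ ⟪g, δh⟫) (hαup : ⟪g, δh⟫ ≤ A0)
    (hcap : ∀ ξ : E, ‖ξ‖ = 1 → ‖ξ - δh‖ ≤ c'/2 → ⟪g, ξ⟫ ≤ D) :
    ‖g‖ ≤ A0 + (D + A0) * (4/c') := by
  set α : ℝ := ⟪g, δh⟫ with hα
  set gp : E := g - α • δh with hgp
  have hδδ : ⟪δh, δh⟫ = 1 := by
    rw [real_inner_self_eq_norm_mul_norm, hδh]; norm_num
  have horth : ⟪δh, gp⟫ = 0 := by
    rw [hgp, inner_sub_right, real_inner_smul_right, hδδ, real_inner_comm g δh, ← hα]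
    ring
  have hgsq : ‖gp‖^2 = ‖g‖^2 - α^2 := by
    rw [hgp, norm_sub_sq_real, real_inner_smul_right, norm_smul, hδh, ← hα]
    simp only [Real.norm_eq_abs, mul_one, mul_pow, sq_abs, one_pow]
    ring
  have hinner_g_gp : ⟪g, gp⟫ = ‖gp‖^2 := by
    rw [hgp, inner_sub_right, real_inner_smul_right, ← hα, hgsq,
      real_inner_self_eq_norm_sq]
    ring
  have habs : |α| ≤ A0 := abs_le.2 ⟨by linarith, hαup⟩
  have hgperp : ‖gp‖ ≤ (D + A0) * (4/c') := by
    rcases eq_or_ne gp 0 with h0 | hne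
    · rw [h0, norm_zero]; positivity
    · set s : ℝ := c'/4 with hs
      have hspos : 0 < s := by positivity
      have hs1 : s ≤ 1/4 := by rw [hs]; linarith
      set a : ℝ := Real.sqrt (1 - s^2) with ha
      have ha2 : a^2 = 1 - s^2 := Real.sq_sqrt (by nlinarith)
      have ha0 : 0 ≤ a := Real.sqrt_nonneg _
      have ha1 : a ≤ 1 := by nlinarith
      have haa : 1 - s^2 ≤ a := by
        have h1 : ((1:ℝ) - s^2)^2 ≤ 1 - s^2 := by nlinarith
        have h2 := Real.sqrt_le_sqrt h1
        rwa [Real.sqrt_sq (by nlinarith)] at h2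
      have hgpn : (0:ℝ) < ‖gp‖ := norm_pos_iff.2 hne
      set ξ : E := a • δh + (s / ‖gp‖) • gp with hξ
      have hξsq : ‖ξ‖^2 = 1 := by
        rw [hξ, norm_add_sq_real, real_inner_smul_left, real_inner_smul_right, horth,
          norm_smul, norm_smul, hδh, Real.norm_eq_abs, Real.norm_eq_abs,
          abs_of_nonneg ha0, abs_of_nonneg (by positivity : (0:ℝ) ≤ s / ‖gp‖)]
        field_simp
        nlinarith
      have hξn : ‖ξ‖ = 1 := by nlinarith [norm_nonneg ξ]
      have hξd : ‖ξ - δh‖ ≤ c'/2 := by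
        have e1 : ξ - δh = (a - 1) • δh + (s / ‖gp‖) • gp := by
          rw [hξ, sub_smul, one_smul]; abel
        have e2 : ‖ξ - δh‖^2 = (a-1)^2 + s^2 := by
          rw [e1, norm_add_sq_real, real_inner_smul_left, real_inner_smul_right, horth,
            norm_smul, norm_smul, hδh, Real.norm_eq_abs, Real.norm_eq_abs,
            abs_of_nonneg (by positivity : (0:ℝ) ≤ s / ‖gp‖)]
          rw [mul_one, mul_pow, sq_abs]
          field_simp
          ring
        have e3 : ‖ξ - δh‖^2 ≤ (c'/2)^2 := by
          rw [e2]
          have e4 : (a-1)^2 + s^2 = 2*(1-a) - (1 - a^2 - s^2) := by ring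
          rw [e4, ha2]
          nlinarith
        nlinarith [norm_nonneg (ξ - δh)]
      have hinξ : ⟪g, ξ⟫ = a * α + s * ‖gp‖ := by
        rw [hξ, inner_add_right, real_inner_smul_right, real_inner_smul_right, ← hα,
          hinner_g_gp]
        field_simp
      have hfin := hcap ξ hξn hξd
      rw [hinξ] at hfin
      have haα : -A0 ≤ a * α := by
        rcases le_or_gt 0 α with h' | h'
        · nlinarith
        · have h1 : (1 - a) * α ≤ 0 :=
            mul_nonpos_of_nonneg_of_nonpos (by linarith) (le_of_lt h')
          nlinarith
      rw [show (D + A0) * (4/c') = (D + A0) / s by rw [hs]; field_simp]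
      rw [le_div_iff₀ hspos]
      nlinarith
  calc ‖g‖ = ‖α • δh + gp‖ := by rw [hgp]; congr 1; abel
    _ ≤ ‖α • δh‖ + ‖gp‖ := norm_add_le _ _
    _ = |α| + ‖gp‖ := by rw [norm_smul, hδh, Real.norm_eq_abs, mul_one]
    _ ≤ A0 + (D + A0) * (4/c') := by linarith


set_option maxHeartbeats 1000000 in
lemma cone_contradiction {d : ℕ} (h : Euc d → ℝ) (hpos : ∀ x, 0 ≤ h x)
    (hconv : ConvexOn ℝ Set.univ h)
    (h3 : ∀ C : ℝ, ∃ R, ∀ x : Euc d, R ≤ ‖x‖ → C * ‖x‖ ≤ h x)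
    (D b δmin c' : ℝ) (hD : 0 ≤ D) (hδmin : 0 < δmin) (hb : δmin ≤ b)
    (hc' : 0 < c') (hc1 : c' ≤ 1) :
    ∃ R : ℝ, ∀ (p δ zz : Euc d), ‖zz‖ = 1 → δmin ≤ ‖δ‖ → ‖δ‖ ≤ b →
      c' * ‖δ‖ ≤ ⟪zz, δ⟫ → R ≤ ‖p‖ →
      (∀ q : Euc d, ‖q‖ * (c'/2) ≤ ⟪zz, q⟫ → ⟪zz, q⟫ ≤ b + 1 → h (p + q) ≤ h p) →
      ¬ (h p ≤ h (p + δ) + D) := by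
  set A0 : ℝ := D + D/δmin with hA0
  have hA0nn : 0 ≤ A0 := by positivity
  set K : ℝ := A0 + (D + A0) * (4/c') with hK
  have hKnn : 0 ≤ K := by positivity
  set C : ℝ := K + D + h 0 + K*b + 1 with hC
  obtain ⟨R₀, hR₀⟩ := h3 C
  refine ⟨max R₀ 1, fun p δ zz hz hδ1 hδ2 hmargin hp hcone hcontra => ?_⟩
  have hδpos : 0 < ‖δ‖ := lt_of_lt_of_le hδmin hδ1
  have hbpos : 0 < b := lt_of_lt_of_le hδmin hb
  obtain ⟨δh, hδhdef⟩ : ∃ w : Euc d, w = ‖δ‖⁻¹ • δ := ⟨_, rfl⟩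
  have hδhn : ‖δh‖ = 1 := by
    rw [hδhdef, norm_smul, norm_inv, norm_norm, inv_mul_cancel₀ (ne_of_gt hδpos)]
  have hδeq : δ = ‖δ‖ • δh := by
    rw [hδhdef, smul_smul, mul_inv_cancel₀ (ne_of_gt hδpos), one_smul]
  have hinnerδh : c' ≤ ⟪zz, δh⟫ := by
    rw [hδhdef, real_inner_smul_right]
    rw [show c' = ‖δ‖⁻¹ * (c' * ‖δ‖) by field_simp]
    exact mul_le_mul_of_nonneg_left hmargin (by positivity)
  obtain ⟨P, hP⟩ : ∃ w : Euc d, w = p + δ := ⟨_, rfl⟩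
  have hPp : h P ≤ h p := by
    rw [hP]
    refine hcone δ ?_ ?_
    · nlinarith
    · calc ⟪zz, δ⟫ ≤ ‖zz‖ * ‖δ‖ := real_inner_le_norm zz δ
        _ ≤ b + 1 := by rw [hz]; nlinarith
  rw [← hP] at hcontra
  obtain ⟨g, hg⟩ := exists_subgradient h hconv P
  have hcap : ∀ ξ : Euc d, ‖ξ‖ = 1 → ‖ξ - δh‖ ≤ c'/2 → ⟪g, ξ⟫ ≤ D := by
    intro ξ hξn hξd
    have h1 := hg (P + ξ)
    rw [add_sub_cancel_left] at h1
    have h2 : h (P + ξ) ≤ h p := by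
      rw [hP, add_assoc]
      have e2 : |⟪zz, ξ - δh⟫| ≤ c'/2 := by
        calc |⟪zz, ξ - δh⟫| ≤ ‖zz‖ * ‖ξ - δh‖ := abs_real_inner_le_norm zz _
          _ ≤ c'/2 := by rw [hz, one_mul]; exact hξd
      have e4 : -(c'/2) ≤ ⟪zz, ξ - δh⟫ := neg_le_of_abs_le e2
      have e3 : ‖δ + ξ‖ ≤ ‖δ‖ + 1 := by
        calc ‖δ + ξ‖ ≤ ‖δ‖ + ‖ξ‖ := norm_add_le δ ξ
          _ = ‖δ‖ + 1 := by rw [hξn]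
      have e1 : ⟪zz, δ + ξ⟫ = ⟪zz, δ⟫ + ⟪zz, δh⟫ + ⟪zz, ξ - δh⟫ := by
        rw [inner_add_right, inner_sub_right]; ring
      refine hcone (δ + ξ) ?_ ?_
      · rw [e1]; nlinarith
      · calc ⟪zz, δ + ξ⟫ ≤ ‖zz‖ * ‖δ + ξ‖ := real_inner_le_norm zz _
          _ ≤ b + 1 := by rw [hz, one_mul]; linarith
    linarith
  have hαup : ⟪g, δh⟫ ≤ A0 := by
    have h1 := hcap δh hδhn (by simp; positivity)
    have h2 : 0 ≤ D/δmin := by positivity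
    rw [hA0]; linarith
  have hαlow : -A0 ≤ ⟪g, δh⟫ := by
    have h1 := hg p
    have e1 : p - P = -δ := by rw [hP]; abel
    rw [e1, inner_neg_right] at h1
    have h2 : -D ≤ ⟪g, δ⟫ := by linarith
    have e2 : ⟪g, δ⟫ = ‖δ‖ * ⟪g, δh⟫ := by
      nth_rewrite 1 [hδeq]
      rw [real_inner_smul_right]
    rw [e2] at h2
    by_contra hcon
    push_neg at hcon
    have hXneg : ⟪g, δh⟫ ≤ 0 := le_of_lt (lt_of_lt_of_le hcon (neg_nonpos.2 hA0nn))
    have m1 : (‖δ‖ - δmin) * ⟪g, δh⟫ ≤ 0 :=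
      mul_nonpos_of_nonneg_of_nonpos (sub_nonneg.2 hδ1) hXneg
    have m2 : δmin * ⟪g, δh⟫ < δmin * (-A0) := by
      exact mul_lt_mul_of_pos_left hcon hδmin
    have m3 : δmin * A0 = δmin * D + D := by
      rw [hA0]; field_simp
    have m4 : 0 ≤ δmin * D := by positivity
    nlinarith
  have hgnorm : ‖g‖ ≤ K := by
    rw [hK]
    exact norm_le_of_cap g δh hδhn c' D A0 hc' hc1 hD hA0nn hαlow hαup hcap
  have h0b := hg 0
  have e1 : ⟪g, (0:Euc d) - P⟫ = -⟪g, P⟫ := by rw [zero_sub, inner_neg_right]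
  rw [e1] at h0b
  have e2 : ⟪g, P⟫ ≤ ‖g‖ * ‖P‖ := le_of_abs_le (abs_real_inner_le_norm g P)
  have e3 : ‖P‖ ≤ ‖p‖ + b := by
    rw [hP]
    calc ‖p + δ‖ ≤ ‖p‖ + ‖δ‖ := norm_add_le p δ
      _ ≤ ‖p‖ + b := by linarith
  have hpB : R₀ ≤ ‖p‖ := le_trans (le_max_left _ _) hp
  have hp1 : (1:ℝ) ≤ ‖p‖ := le_trans (le_max_right _ _) hp
  have hCp : C * ‖p‖ ≤ h p := hR₀ p hpB
  have e4 : ‖g‖ * ‖P‖ ≤ K * (‖p‖ + b) := mul_le_mul hgnorm e3 (norm_nonneg P) hKnn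
  have h0nn := hpos 0
  have hfin : C * ‖p‖ - D - K * (‖p‖ + b) ≤ h 0 := by linarith
  rw [hC] at hfin
  nlinarith [mul_le_mul_of_nonneg_left hp1
    (show (0:ℝ) ≤ D + h 0 + K*b + 1 by positivity)]


lemma optassign_swap {d n : ℕ} (h : Euc d → ℝ) (u x' : Fin n → Euc d)
    (σ : Equiv.Perm (Fin n)) (hopt : IsOptAssign h u x' σ) (i j : Fin n) (hij : i ≠ j) :
    h (u i - x' (σ i)) + h (u j - x' (σ j)) ≤ h (u i - x' (σ j)) + h (u j - x' (σ i)) := by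
  have key : ∀ F : Fin n → ℝ, ∑ k, F k = F i + F j + ∑ k ∈ (Finset.univ.erase i).erase j, F k := by
    intro F
    rw [← Finset.sum_erase_add Finset.univ F (Finset.mem_univ i),
      ← Finset.sum_erase_add (Finset.univ.erase i) F
        (by simp [Ne.symm hij] : j ∈ Finset.univ.erase i)]
    ring
  have hτ := hopt (σ * Equiv.swap i j)
  rw [key (fun k => cost h (u k) (x' (σ k))),
    key (fun k => cost h (u k) (x' ((σ * Equiv.swap i j) k)))] at hτ
  have hrest : ∑ k ∈ (Finset.univ.erase i).erase j, cost h (u k) (x' ((σ * Equiv.swap i j) k))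
      = ∑ k ∈ (Finset.univ.erase i).erase j, cost h (u k) (x' (σ k)) := by
    refine Finset.sum_congr rfl fun k hk => ?_
    have hk1 : k ≠ j := (Finset.mem_erase.1 hk).1
    have hk2 : k ≠ i := (Finset.mem_erase.1 (Finset.mem_erase.1 hk).2).1
    rw [Equiv.Perm.mul_apply, Equiv.swap_apply_of_ne_of_ne hk2 hk1]
  rw [hrest] at hτ
  have e1 : (σ * Equiv.swap i j) i = σ j := by rw [Equiv.Perm.mul_apply, Equiv.swap_apply_left]
  have e2 : (σ * Equiv.swap i j) j = σ i := by rw [Equiv.Perm.mul_apply, Equiv.swap_apply_right]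
  rw [e1, e2] at hτ
  simp only [cost] at hτ
  linarith

lemma far_card_le {d n : ℕ} (x x' : Fin n → Euc d) (ℓ : ℕ)
    (hsh : SharesAtoms x x' (n - ℓ)) (hℓn : ℓ ≤ n) (B : ℝ) (hB : ∀ j, ‖x j‖ ≤ B)
    (σ : Equiv.Perm (Fin n)) :
    (Finset.univ.filter fun j => B < ‖x' (σ j)‖).card ≤ ℓ := by
  obtain ⟨s, hcard, g, hinj, hg⟩ := hsh
  set T : Finset (Fin n) := s.image g with hT
  have hTcard : T.card = s.card := Finset.card_image_of_injOn hinj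
  have hTbd : ∀ k ∈ T, ‖x' k‖ ≤ B := by
    intro k hk
    obtain ⟨a, ha, rfl⟩ := Finset.mem_image.1 hk
    rw [hg a ha]; exact hB a
  set F : Finset (Fin n) := Finset.univ.filter fun j => B < ‖x' (σ j)‖ with hF
  have himg : F.image σ ⊆ Finset.univ \ T := by
    intro k hk
    obtain ⟨j, hj, rfl⟩ := Finset.mem_image.1 hk
    rw [Finset.mem_sdiff]
    refine ⟨Finset.mem_univ _, fun hmem => ?_⟩
    have := hTbd _ hmem
    have := (Finset.mem_filter.1 hj).2
    linarith
  have h1 : F.card = (F.image σ).card := (Finset.card_image_of_injective F σ.injective).symm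
  have h2 : (Finset.univ \ T).card = n - T.card := by
    rw [Finset.card_sdiff_of_subset (Finset.subset_univ T), Finset.card_univ, Fintype.card_fin]
  have h3 : F.card ≤ n - T.card := h2 ▸ h1 ▸ Finset.card_le_card himg
  have h4 : n - T.card ≤ ℓ := by
    rw [hTcard]
    omega
  omega


set_option maxHeartbeats 3000000 in
lemma exists_good_direction {d n : ℕ} (hd : 1 ≤ d) (h : Euc d → ℝ)
    (hpos : ∀ x, 0 ≤ h x) (h1 : H1 h) (h2 : H2 h) (h3 : H3 h)
    (u x : Fin n → Euc d) (hu : Function.Injective u) (i : Fin n) (ℓ : ℕ)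
    (hℓ1 : 1 ≤ ℓ) (hℓn : ℓ ≤ n)
    (hub : ¬ IsBounded (fsBadSet h u x i ℓ)) :
    ∃ v : Euc d, ‖v‖ = 1 ∧
      (Finset.univ.filter fun j => ⟪v, u j - u i⟫ < 0).card + 1 ≤ ℓ := by
  have hconv : ConvexOn ℝ Set.univ h := h1.convexOn
  have hcont : Continuous h := by
    rw [← continuousOn_univ]; exact hconv.continuousOn isOpen_univ
  have h3' : ∀ C : ℝ, ∃ R, ∀ w : Euc d, R ≤ ‖w‖ → C * ‖w‖ ≤ h w := h3
  -- a fallback unit vector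
  set e : Euc d := EuclideanSpace.single (⟨0, hd⟩ : Fin d) (1:ℝ) with he_def
  have he : ‖e‖ = 1 := by rw [he_def, EuclideanSpace.norm_single]; norm_num
  -- bound on the sample points
  set B : ℝ := Finset.univ.sup' ⟨i, Finset.mem_univ i⟩ (fun j => ‖x j‖) with hBdef
  have hB : ∀ j, ‖x j‖ ≤ B := fun j => Finset.le_sup' (fun j => ‖x j‖) (Finset.mem_univ j)
  have hB0 : 0 ≤ B := le_trans (norm_nonneg _) (hB i)
  -- the constant D
  obtain ⟨x₀, hx₀, hmax⟩ := (isCompact_closedBall (0:Euc d) (‖u i‖ + B)).exists_isMaxOn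
    ⟨0, Metric.mem_closedBall_self (by positivity)⟩ hcont.continuousOn
  set D : ℝ := h x₀ with hDdef
  have hDb : ∀ w : Euc d, ‖w‖ ≤ ‖u i‖ + B → h w ≤ D :=
    fun w hw => hmax (mem_closedBall_zero_iff.2 hw)
  have hD : 0 ≤ D := hpos x₀
  -- degenerate case : only one point
  rcases Finset.eq_empty_or_nonempty (Finset.univ.erase i) with hs₀ | hs₀
  · refine ⟨e, he, ?_⟩
    have hall : ∀ j : Fin n, j = i := by
      intro j; by_contra hj
      have : j ∈ Finset.univ.erase i := Finset.mem_erase.2 ⟨hj, Finset.mem_univ _⟩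
      simp [hs₀] at this
    have hempty : (Finset.univ.filter fun j => ⟪e, u j - u i⟫ < 0) = ∅ := by
      rw [Finset.filter_eq_empty_iff]
      intro j _
      rw [hall j, sub_self, inner_zero_right]
      simp
    rw [hempty]
    simpa using hℓ1
  -- geometric constants
  set δmin : ℝ := (Finset.univ.erase i).inf' hs₀ (fun j => ‖u j - u i‖) with hδmindef
  set b : ℝ := (Finset.univ.erase i).sup' hs₀ (fun j => ‖u j - u i‖) with hbdef
  have hδminpos : 0 < δmin := by
    rw [hδmindef, Finset.lt_inf'_iff]
    intro j hj
    have : u j ≠ u i := fun hcon => (Finset.mem_erase.1 hj).1 (hu hcon)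
    rw [norm_pos_iff]
    exact sub_ne_zero.2 this
  have hδminle : ∀ j ∈ Finset.univ.erase i, δmin ≤ ‖u j - u i‖ :=
    fun j hj => Finset.inf'_le _ hj
  have hble : ∀ j ∈ Finset.univ.erase i, ‖u j - u i‖ ≤ b :=
    fun j hj => Finset.le_sup' (fun j => ‖u j - u i‖) hj
  have hδminb : δmin ≤ b := by
    obtain ⟨j₀, hj₀⟩ := hs₀
    exact le_trans (hδminle j₀ hj₀) (hble j₀ hj₀)
  have hbpos : 0 < b := lt_of_lt_of_le hδminpos hδminb
  -- the angle sequence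
  have hθmem : ∀ k : ℕ, Real.pi - 1/(k+1) ∈ Set.Ioo 0 Real.pi := by
    intro k
    constructor
    · have h1' : 1/((k:ℝ)+1) ≤ 1 := by
        rw [div_le_one (by positivity)]
        simp
      nlinarith [Real.pi_gt_three]
    · have : 0 < 1/((k:ℝ)+1) := by positivity
      linarith
  have hβpos : ∀ k : ℕ, 0 < Real.cos ((Real.pi - 1/(k+1)) / 2) := by
    intro k
    apply Real.cos_pos_of_mem_Ioo
    obtain ⟨hk1, hk2⟩ := hθmem k
    constructor
    · nlinarith [Real.pi_pos]
    · nlinarith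
  have hβle : ∀ k : ℕ, Real.cos ((Real.pi - 1/(k+1)) / 2) ≤ 1/(2*(k+1)) := by
    intro k
    have hne : ((k:ℝ)+1) ≠ 0 := by positivity
    have e1 : (Real.pi - 1/(k+1)) / 2 = Real.pi/2 - 1/(2*((k:ℝ)+1)) := by
      field_simp
    rw [e1, Real.cos_pi_div_two_sub]
    exact Real.sin_le (by positivity)
  -- per-k escaping data
  have hstep : ∀ k : ℕ, ∃ (x' : Fin n → Euc d) (σ : Equiv.Perm (Fin n)) (zz : Euc d),
      SharesAtoms x x' (n - ℓ) ∧ IsOptAssign h u x' σ ∧ B < ‖x' (σ i)‖ ∧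
      (k:ℝ) ≤ ‖u i - x' (σ i)‖ ∧ ‖zz‖ = 1 ∧
      ∀ q : Euc d, ‖q‖ * Real.cos ((Real.pi - 1/(k+1)) / 2) ≤ ⟪zz, q⟫ → ⟪zz, q⟫ ≤ b + 1 →
        h ((u i - x' (σ i)) + q) ≤ h (u i - x' (σ i)) := by
    intro k
    obtain ⟨M, hM0, hMprop⟩ := h2 (b+1) (by positivity) (Real.pi - 1/(k+1)) (hθmem k)
    obtain ⟨y, hy, hyn⟩ : ∃ y ∈ fsBadSet h u x i ℓ,
        max (max (M + ‖u i‖) B) (k + ‖u i‖) < ‖y‖ := by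
      by_contra hc
      push_neg at hc
      exact hub (isBounded_iff_forall_norm_le.2 ⟨_, hc⟩)
    obtain ⟨x', σ, hsh, hopt, rfl⟩ := hy
    have hyB : B < ‖x' (σ i)‖ :=
      lt_of_le_of_lt (le_trans (le_max_right _ _) (le_max_left _ _)) hyn
    have hnormp : ‖x' (σ i)‖ - ‖u i‖ ≤ ‖u i - x' (σ i)‖ := by
      rw [norm_sub_rev]
      exact norm_sub_norm_le _ _
    have hch1 : M + ‖u i‖ ≤ max (max (M + ‖u i‖) B) ((k:ℝ) + ‖u i‖) :=
      le_trans (le_max_left (M + ‖u i‖) B) (le_max_left _ _)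
    have hch2 : (k:ℝ) + ‖u i‖ ≤ max (max (M + ‖u i‖) B) ((k:ℝ) + ‖u i‖) :=
      le_max_right _ _
    have hpM : M < ‖u i - x' (σ i)‖ := by linarith
    have hpk : (k:ℝ) ≤ ‖u i - x' (σ i)‖ := by linarith
    obtain ⟨z, hz0, hzcone⟩ := hMprop _ hpM
    have hznorm : (0:ℝ) < ‖z‖ := norm_pos_iff.2 hz0
    have hzzn : ‖‖z‖⁻¹ • z‖ = 1 := by
      rw [norm_smul, norm_inv, norm_norm, inv_mul_cancel₀ (ne_of_gt hznorm)]
    have hzdec : ∀ q : Euc d, ⟪z, q⟫ = ‖z‖ * ⟪‖z‖⁻¹ • z, q⟫ := by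
      intro q
      rw [real_inner_smul_left]
      field_simp
    refine ⟨x', σ, ‖z‖⁻¹ • z, hsh, hopt, hyB, hpk, hzzn, ?_⟩
    intro q hq1 hq2
    refine hzcone _ ⟨?_, ?_⟩
    · rw [add_sub_cancel_left, hzdec q]
      calc ‖q‖ * ‖z‖ * Real.cos ((Real.pi - 1/(k+1)) / 2)
          = ‖z‖ * (‖q‖ * Real.cos ((Real.pi - 1/(k+1)) / 2)) := by ring
        _ ≤ ‖z‖ * ⟪‖z‖⁻¹ • z, q⟫ := by
            exact mul_le_mul_of_nonneg_left hq1 (le_of_lt hznorm)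
    · rw [add_sub_cancel_left, hzdec q]
      calc ‖z‖ * ⟪‖z‖⁻¹ • z, q⟫ ≤ ‖z‖ * (b+1) :=
            mul_le_mul_of_nonneg_left hq2 (le_of_lt hznorm)
        _ = (b+1) * ‖z‖ := by ring
  choose xs σs zs hsh hopt hfar hnormbd hzn hcone using hstep
  -- extract a convergent direction
  obtain ⟨w, hwmem, φ, hφ, hlim⟩ := (isCompact_sphere (0:Euc d) 1).tendsto_subseq
    (x := zs) (fun k => by simp [mem_sphere_zero_iff_norm, hzn k])
  have hw : ‖w‖ = 1 := by simpa [mem_sphere_zero_iff_norm] using hwmem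
  refine ⟨-w, by rw [norm_neg, hw], ?_⟩
  set J : Finset (Fin n) := Finset.univ.filter (fun j => ⟪-w, u j - u i⟫ < 0) with hJdef
  rcases Finset.eq_empty_or_nonempty J with hJe | hJne
  · rw [hJe]
    simpa using hℓ1
  have hJprop : ∀ j ∈ J, j ≠ i ∧ 0 < ⟪w, u j - u i⟫ := by
    intro j hj
    have hj2 := (Finset.mem_filter.1 hj).2
    rw [inner_neg_left] at hj2
    have hpos' : 0 < ⟪w, u j - u i⟫ := by linarith
    refine ⟨fun hji => ?_, hpos'⟩
    rw [hji, sub_self, inner_zero_right] at hpos'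
    exact lt_irrefl 0 hpos'
  have hJerase : ∀ j ∈ J, j ∈ Finset.univ.erase i :=
    fun j hj => Finset.mem_erase.2 ⟨(hJprop j hj).1, Finset.mem_univ _⟩
  set c' : ℝ := J.inf' hJne (fun j => ⟪w, u j - u i⟫ / ‖u j - u i‖) with hc'def
  have hc'pos : 0 < c' := by
    rw [hc'def, Finset.lt_inf'_iff]
    intro j hj
    have h1' := (hJprop j hj).2
    have h2' : (0:ℝ) < ‖u j - u i‖ := lt_of_lt_of_le hδminpos (hδminle j (hJerase j hj))
    positivity
  have hc'le1 : c' ≤ 1 := by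
    obtain ⟨j₀, hj₀⟩ := hJne
    have h2' : (0:ℝ) < ‖u j₀ - u i‖ := lt_of_lt_of_le hδminpos (hδminle j₀ (hJerase j₀ hj₀))
    calc c' ≤ ⟪w, u j₀ - u i⟫ / ‖u j₀ - u i‖ := Finset.inf'_le _ hj₀
      _ ≤ 1 := by
          rw [div_le_one h2']
          calc ⟪w, u j₀ - u i⟫ ≤ ‖w‖ * ‖u j₀ - u i‖ := real_inner_le_norm _ _
            _ = ‖u j₀ - u i‖ := by rw [hw, one_mul]
  have hmarg : ∀ j ∈ J, c' * ‖u j - u i‖ ≤ ⟪w, u j - u i⟫ := by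
    intro j hj
    have h2' : (0:ℝ) < ‖u j - u i‖ := lt_of_lt_of_le hδminpos (hδminle j (hJerase j hj))
    have := Finset.inf'_le (fun j => ⟪w, u j - u i⟫ / ‖u j - u i‖) hj
    rw [← hc'def] at this
    calc c' * ‖u j - u i‖ ≤ (⟪w, u j - u i⟫ / ‖u j - u i‖) * ‖u j - u i‖ :=
          mul_le_mul_of_nonneg_right this (le_of_lt h2')
      _ = ⟪w, u j - u i⟫ := by field_simp
  obtain ⟨R, hR⟩ := cone_contradiction h hpos hconv h3' D b δmin (c'/2) hD hδminpos hδminb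
    (by positivity) (by linarith)
  -- eventually along the subsequence all the conditions hold
  have evJ : ∀ᶠ t in atTop, ∀ j ∈ J, (c'/2) * ‖u j - u i‖ ≤ ⟪zs (φ t), u j - u i⟫ := by
    rw [eventually_all_finset]
    intro j hj
    have h2' : (0:ℝ) < ‖u j - u i‖ := lt_of_lt_of_le hδminpos (hδminle j (hJerase j hj))
    have htend : Tendsto (fun t => ⟪zs (φ t), u j - u i⟫) atTop (nhds ⟪w, u j - u i⟫) :=
      hlim.inner tendsto_const_nhds
    have hlt : (c'/2) * ‖u j - u i‖ < ⟪w, u j - u i⟫ := by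
      have := hmarg j hj
      nlinarith
    exact (htend.eventually (eventually_ge_nhds hlt))
  have ev2 : ∀ᶠ t in atTop, Real.cos ((Real.pi - 1/(φ t+1)) / 2) ≤ (c'/2)/2 := by
    filter_upwards [eventually_ge_atTop ⌈4/c'⌉₊] with t ht
    have h1' : (⌈4/c'⌉₊:ℝ) ≤ t := Nat.cast_le.2 ht
    have h2' : 4/c' ≤ (t:ℝ) := le_trans (Nat.le_ceil _) h1'
    have h3'' : (t:ℝ) ≤ φ t := Nat.cast_le.2 hφ.le_apply
    have h4 : 4/c' ≤ 2*((φ t:ℝ)+1) := by linarith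
    have h5 : (0:ℝ) < 4/c' := by positivity
    calc Real.cos ((Real.pi - 1/(φ t+1)) / 2) ≤ 1/(2*((φ t:ℝ)+1)) := hβle (φ t)
      _ ≤ 1/(4/c') := by
          apply one_div_le_one_div_of_le h5 h4
      _ = (c'/2)/2 := by rw [one_div_div]; ring
  have ev3 : ∀ᶠ t in atTop, R ≤ ‖u i - xs (φ t) (σs (φ t) i)‖ := by
    filter_upwards [eventually_ge_atTop ⌈R⌉₊] with t ht
    have h1' : (⌈R⌉₊:ℝ) ≤ t := Nat.cast_le.2 ht
    have h3'' : (t:ℝ) ≤ φ t := Nat.cast_le.2 hφ.le_apply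
    have := hnormbd (φ t)
    have h4 : R ≤ (⌈R⌉₊:ℝ) := Nat.le_ceil _
    linarith
  obtain ⟨t₀, hev1, hev23⟩ := (evJ.and (ev2.and ev3)).exists
  obtain ⟨hev2, hev3⟩ := hev23
  set k₀ : ℕ := φ t₀ with hk₀
  set F : Finset (Fin n) := Finset.univ.filter (fun j => B < ‖xs k₀ (σs k₀ j)‖) with hFdef
  have hiF : i ∈ F := Finset.mem_filter.2 ⟨Finset.mem_univ _, hfar k₀⟩
  have hJF : ∀ j ∈ J, j ∈ F := by
    intro j hj
    rw [hFdef, Finset.mem_filter]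
    refine ⟨Finset.mem_univ _, ?_⟩
    by_contra hnot
    push_neg at hnot
    have hij : i ≠ j := Ne.symm (hJprop j hj).1
    have hswap := optassign_swap h u (xs k₀) (σs k₀) (hopt k₀) i j hij
    have hDt : h (u i - xs k₀ (σs k₀ j)) ≤ D := by
      apply hDb
      calc ‖u i - xs k₀ (σs k₀ j)‖ ≤ ‖u i‖ + ‖xs k₀ (σs k₀ j)‖ := norm_sub_le _ _
        _ ≤ ‖u i‖ + B := by linarith
    have hQ : 0 ≤ h (u j - xs k₀ (σs k₀ j)) := hpos _
    have hPδ : (u i - xs k₀ (σs k₀ i)) + (u j - u i) = u j - xs k₀ (σs k₀ i) := by abel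
    have hgap : h (u i - xs k₀ (σs k₀ i)) ≤ h ((u i - xs k₀ (σs k₀ i)) + (u j - u i)) + D := by
      rw [hPδ]
      linarith
    refine hR (u i - xs k₀ (σs k₀ i)) (u j - u i) (zs k₀) (hzn k₀)
      (hδminle j (hJerase j hj)) (hble j (hJerase j hj)) (hev1 j hj) hev3 ?_ hgap
    intro q hq1 hq2
    apply hcone k₀ q _ hq2
    calc ‖q‖ * Real.cos ((Real.pi - 1/(k₀+1)) / 2) ≤ ‖q‖ * ((c'/2)/2) :=
          mul_le_mul_of_nonneg_left hev2 (norm_nonneg q)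
      _ ≤ ⟪zs k₀, q⟫ := hq1
  have hsubset : J ⊆ F.erase i := by
    intro j hj
    exact Finset.mem_erase.2 ⟨(hJprop j hj).1, hJF j hj⟩
  have hcard1 : J.card ≤ (F.erase i).card := Finset.card_le_card hsubset
  have hcard2 : (F.erase i).card = F.card - 1 := Finset.card_erase_of_mem hiF
  have hcard3 : 1 ≤ F.card := Finset.card_pos.2 ⟨i, hiF⟩
  have hcard4 : F.card ≤ ℓ := far_card_le x (xs k₀) ℓ (hsh k₀) hℓn B hB (σs k₀)
  omega

set_option maxHeartbeats 1000000 in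
/-- the finite sample breakdown point of `T_{Q_n→P_n}(u_i)` is at least
`TD^-(u_i;Q_n) + 1/n`. -/
theorem finiteSampleBP_ge (d n : ℕ) (hd : 1 ≤ d) (h : Euc d → ℝ)
    (hpos : ∀ x, 0 ≤ h x) (h1 : H1 h) (h2 : H2 h) (h3 : H3 h)
    (u x : Fin n → Euc d) (hu : Function.Injective u) (hx : Function.Injective x)
    (i : Fin n) :
    empTDlt u (u i) + 1 / n ≤ finiteSampleBP h u x i := by
  have hn : 0 < n := i.pos
  have hnR : (0:ℝ) < n := by exact_mod_cast hn
  have hnmem : n ∈ {ℓ : ℕ | 1 ≤ ℓ ∧ ℓ ≤ n ∧ ¬ IsBounded (fsBadSet h u x i ℓ)} := by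
    refine ⟨hn, le_refl n, ?_⟩
    intro hbd
    rw [isBounded_iff_forall_norm_le] at hbd
    obtain ⟨C, hC⟩ := hbd
    set e : Euc d := EuclideanSpace.single (⟨0, hd⟩ : Fin d) (1:ℝ) with he_def
    have he : ‖e‖ = 1 := by rw [he_def, EuclideanSpace.norm_single]; norm_num
    set y₀ : Euc d := (max C 0 + 1) • e with hy₀
    have hy₀mem : y₀ ∈ fsBadSet h u x i n := by
      refine ⟨fun _ => y₀, 1, ⟨∅, by simp, id, by simp, by simp⟩, ?_, rfl⟩
      intro τ
      exact le_of_eq rfl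
    have h1' := hC y₀ hy₀mem
    rw [hy₀, norm_smul, he, Real.norm_eq_abs, mul_one] at h1'
    have h2' : max C 0 + 1 ≤ C := le_trans (le_abs_self _) h1'
    have h3' : C ≤ max C 0 := le_max_left _ _
    linarith
  have hmem := Nat.sInf_mem ⟨n, hnmem⟩
  obtain ⟨hs1, hs2, hs3⟩ := hmem
  obtain ⟨v, hv, hcard⟩ := exists_good_direction hd h hpos h1 h2 h3 u x hu i _ hs1 hs2 hs3
  have hbdd : BddBelow (Set.range fun v : {v : Euc d // ‖v‖ = 1} =>
      ((Finset.univ.filter fun j => ⟪(v:Euc d), u j - u i⟫ < 0).card : ℝ)/n) := by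
    refine ⟨0, ?_⟩
    rintro _ ⟨v', rfl⟩
    positivity
  have hTD : empTDlt u (u i) ≤
      ((Finset.univ.filter fun j => ⟪v, u j - u i⟫ < 0).card : ℝ)/n := by
    unfold empTDlt
    exact ciInf_le hbdd (⟨v, hv⟩ : {v : Euc d // ‖v‖ = 1})
  have hc : ((Finset.univ.filter fun j => ⟪v, u j - u i⟫ < 0).card : ℝ) + 1 ≤
      ((sInf {ℓ : ℕ | 1 ≤ ℓ ∧ ℓ ≤ n ∧ ¬ IsBounded (fsBadSet h u x i ℓ)} : ℕ) : ℝ) := by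
    exact_mod_cast hcard
  unfold finiteSampleBP
  calc empTDlt u (u i) + 1/n
      ≤ ((Finset.univ.filter fun j => ⟪v, u j - u i⟫ < 0).card : ℝ)/n + 1/n := by linarith
    _ = (((Finset.univ.filter fun j => ⟪v, u j - u i⟫ < 0).card : ℝ) + 1)/n := by ring
    _ ≤ _ := by
        gcongr

end
end

section
/- Assume the cost c(x,y) = h(x−y) satisfies (H1)–(H3). Consider the setup: distinct points u_1,…,u_n ∈ ℝ^d, distinct points x_1,…,x_n ∈ ℝ^d, an optimal assignment σ_n for (u,x) with T(u_i) = x_{σ_n(i)}; fix j ∈ {1,…,n} and v ∈ S^{d−1}, relabel u_1,…,u_n as u_(1),…,u_(n) so that for some ℓ, u_(ℓ) = u_j and {u_(1),…,u_(ℓ)} consists exactly of the sample points in the halfspace {x : ⟨v, x − u_j⟩ ≤ 0}; fix z_0 ∈ ℝ^d, m ∈ {1,…,n}, and for k ∈ ℕ set z_k = u_j − ∇h*(z_0 + k v); let T_k be an optimal assignment of the n source points u_(1),…,u_(n) to the n target points consisting of z_k with multiplicity m together with T(u_(i)) for i = m+1,…,n (minimizing the total cost ∑_i c(u_(i), ·)).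 If there exists r ≥ ℓ+1 such that T_k(u_(r)) = z_k for all sufficiently large k, then ‖T_k(u_j)‖ → ∞ as k → ∞. -/
open Filter MeasureTheory Bornology Topology Set
open scoped RealInnerProductSpace ENNReal BigOperators Classical

noncomputable section

/-- `xq` maximizes `x ↦ ⟪x,q⟫ - h x`. -/
def AuxIsMaxPt {d : ℕ} (h : Euc d → ℝ) (q xq : Euc d) : Prop :=
  ∀ x : Euc d, ⟪x, q⟫ - h x ≤ ⟪xq, q⟫ - h xq

lemma aux_cont {d : ℕ} {h : Euc d → ℝ} (h1 : H1 h) : Continuous h := by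
  have := (h1.convexOn).continuousOn isOpen_univ
  rwa [← continuousOn_univ]

lemma aux_exists_max {d : ℕ} {h : Euc d → ℝ} (hpos : ∀ x, 0 ≤ h x) (hcont : Continuous h)
    (h3 : H3 h) (q : Euc d) : ∃ xq, AuxIsMaxPt h q xq := by
  obtain ⟨R, hR⟩ := h3 (‖q‖ + 1)
  set R₀ := max R (h 0 + 1) with hR₀def
  have hR₀ : 0 < R₀ := lt_of_lt_of_le (by linarith [hpos 0]) (le_max_right _ _)
  have hgc : Continuous fun x : Euc d => ⟪x, q⟫ - h x :=
    (continuous_id.inner continuous_const).sub hcont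
  obtain ⟨xq, hmem, hmax⟩ := (isCompact_closedBall (0 : Euc d) R₀).exists_isMaxOn
    ⟨0, by simp [hR₀.le]⟩ hgc.continuousOn
  refine ⟨xq, fun x => ?_⟩
  by_cases hx : x ∈ Metric.closedBall (0 : Euc d) R₀
  · exact hmax hx
  · have hxn : R₀ < ‖x‖ := by simpa [Metric.mem_closedBall, dist_zero_right] using hx
    have hRx : R ≤ ‖x‖ := le_trans (le_max_left _ _) hxn.le
    have hhx := hR x hRx
    have hCS : ⟪x, q⟫ ≤ ‖x‖ * ‖q‖ := real_inner_le_norm x q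
    have h0m : (0 : Euc d) ∈ Metric.closedBall (0 : Euc d) R₀ := by simp [hR₀.le]
    have h0 : ⟪(0 : Euc d), q⟫ - h 0 ≤ ⟪xq, q⟫ - h xq := hmax h0m
    have h0i : ⟪(0 : Euc d), q⟫ = 0 := inner_zero_left q
    have hmax0 : h 0 + 1 ≤ R₀ := le_max_right _ _
    nlinarith [norm_nonneg x]

lemma aux_max_unique {d : ℕ} {h : Euc d → ℝ} (h1 : H1 h) {q x1 x2 : Euc d}
    (m1 : AuxIsMaxPt h q x1) (m2 : AuxIsMaxPt h q x2) : x1 = x2 := by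
  by_contra hne
  have heq : ⟪x1, q⟫ - h x1 = ⟪x2, q⟫ - h x2 := le_antisymm (m2 x1) (m1 x2)
  have hsc := h1.2 (Set.mem_univ x1) (Set.mem_univ x2) hne
    (by norm_num : (0:ℝ) < 1/2) (by norm_num : (0:ℝ) < 1/2) (by norm_num)
  have hm := m1 ((1/2 : ℝ) • x1 + (1/2 : ℝ) • x2)
  rw [inner_add_left, real_inner_smul_left, real_inner_smul_left] at hm
  simp only [smul_eq_mul] at hsc
  linarith


lemma aux_bound {d : ℕ} {h : Euc d → ℝ} (p : Euc d) {xp : Euc d}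
    (h3 : H3 h) (hxp : AuxIsMaxPt h p xp) :
    ∃ B : ℝ, 0 < B ∧ ‖xp‖ ≤ B ∧ ∀ q xq : Euc d, ‖q - p‖ ≤ 1 → AuxIsMaxPt h q xq → ‖xq‖ ≤ B := by
  obtain ⟨R, hR⟩ := h3 (‖p‖ + 2)
  set S := ⟪xp, p⟫ - h xp with hS
  refine ⟨max R (‖xp‖ + |S| + 1), lt_of_lt_of_le (by positivity) (le_max_right _ _),
    le_trans (by linarith [abs_nonneg S]) (le_max_right _ _), fun q xq hq hxq => ?_⟩
  set B := max R (‖xp‖ + |S| + 1) with hB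
  by_contra hbig
  push_neg at hbig
  have hRxq : R ≤ ‖xq‖ := le_trans (le_max_left _ _) hbig.le
  have hhxq := hR xq hRxq
  have hqn : ‖q‖ ≤ ‖p‖ + 1 := by
    have hqe : q = p + (q - p) := by abel
    calc ‖q‖ = ‖p + (q - p)‖ := by rw [← hqe]
    _ ≤ ‖p‖ + ‖q - p‖ := norm_add_le _ _
    _ ≤ ‖p‖ + 1 := by linarith
  have hCS : ⟪xq, q⟫ ≤ ‖xq‖ * ‖q‖ := real_inner_le_norm xq q
  have h1 : ⟪xq, q⟫ - h xq ≤ -‖xq‖ := by nlinarith [norm_nonneg xq]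
  have h2 : ⟪xp, q⟫ = ⟪xp, p⟫ + ⟪xp, q - p⟫ := by rw [← inner_add_right]; congr 1; abel
  have h3' : |⟪xp, q - p⟫| ≤ ‖xp‖ * ‖q - p‖ := abs_real_inner_le_norm xp (q - p)
  have h4 : S - ‖xp‖ ≤ ⟪xp, q⟫ - h xp := by
    rw [h2]
    have : -(‖xp‖ * 1) ≤ ⟪xp, q - p⟫ := by
      nlinarith [neg_abs_le ⟪xp, q - p⟫, norm_nonneg xp]
    linarith
  have h5 := hxq xp
  have hBxq : ‖xp‖ + |S| + 1 < ‖xq‖ := lt_of_le_of_lt (le_max_right _ _) hbig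
  nlinarith [abs_nonneg S, neg_abs_le S]

lemma aux_stable {d : ℕ} {h : Euc d → ℝ} (h1 : H1 h) (h3 : H3 h)
    (p : Euc d) {xp : Euc d} (hxp : AuxIsMaxPt h p xp) :
    ∀ ε : ℝ, 0 < ε → ∃ δ : ℝ, 0 < δ ∧
      ∀ q xq : Euc d, ‖q - p‖ ≤ δ → AuxIsMaxPt h q xq → ‖xq - xp‖ ≤ ε := by
  intro ε hε
  have hcont := aux_cont h1
  obtain ⟨B, hB0, hBxp, hB⟩ := aux_bound p h3 hxp
  set S := ⟪xp, p⟫ - h xp with hS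
  set A : Set (Euc d) := {x | ε ≤ ‖x - xp‖} ∩ Metric.closedBall 0 B with hA
  by_cases hAne : A.Nonempty
  · have hAcl : IsClosed {x : Euc d | ε ≤ ‖x - xp‖} :=
      isClosed_le continuous_const ((continuous_id.sub continuous_const).norm)
    have hAcpt : IsCompact A := (isCompact_closedBall (0 : Euc d) B).inter_left hAcl
    have hgc : Continuous fun x : Euc d => S - (⟪x, p⟫ - h x) :=
      continuous_const.sub ((continuous_id.inner continuous_const).sub hcont)
    obtain ⟨x₀, hx₀A, hmin⟩ := hAcpt.exists_isMinOn hAne hgc.continuousOn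
    set c := S - (⟪x₀, p⟫ - h x₀) with hc
    have hc0 : 0 < c := by
      rcases lt_or_eq_of_le (hxp x₀) with hlt | heq
      · simpa [hc] using hlt
      · exfalso
        have : AuxIsMaxPt h p x₀ := fun x' => heq ▸ hxp x'
        have := aux_max_unique h1 this hxp
        have hx₀ : ε ≤ ‖x₀ - xp‖ := hx₀A.1
        rw [this] at hx₀; simp at hx₀; linarith
    refine ⟨min 1 (c / (2 * (B + ‖xp‖) + 1)), by positivity, fun q xq hq hxq => ?_⟩
    have hq1 : ‖q - p‖ ≤ 1 := le_trans hq (min_le_left _ _)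
    have hq2 : ‖q - p‖ ≤ c / (2 * (B + ‖xp‖) + 1) := le_trans hq (min_le_right _ _)
    have hxqB : ‖xq‖ ≤ B := hB q xq hq1 hxq
    by_contra hfar
    push_neg at hfar
    have hxqA : xq ∈ A := ⟨hfar.le, by simpa [Metric.mem_closedBall, dist_zero_right] using hxqB⟩
    have hminq : c ≤ S - (⟪xq, p⟫ - h xq) := hmin hxqA
    have e1 : ⟪xq, q⟫ = ⟪xq, p⟫ + ⟪xq, q - p⟫ := by rw [← inner_add_right]; congr 1; abel
    have e2 : ⟪xp, q⟫ = ⟪xp, p⟫ + ⟪xp, q - p⟫ := by rw [← inner_add_right]; congr 1; abel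
    have b1 : ⟪xq, q - p⟫ ≤ B * ‖q - p‖ := by
      have := real_inner_le_norm xq (q - p)
      nlinarith [norm_nonneg (q - p)]
    have b2 : -(‖xp‖ * ‖q - p‖) ≤ ⟪xp, q - p⟫ := by
      nlinarith [neg_abs_le ⟪xp, q - p⟫, abs_real_inner_le_norm xp (q - p)]
    have hmaxq := hxq xp
    have hd : ‖q - p‖ * (2 * (B + ‖xp‖) + 1) ≤ c :=
      (le_div_iff₀ (by positivity : (0:ℝ) < 2 * (B + ‖xp‖) + 1)).mp hq2
    nlinarith [norm_nonneg (q - p), norm_nonneg xp]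
  · refine ⟨1, one_pos, fun q xq hq hxq => ?_⟩
    have hxqB : ‖xq‖ ≤ B := hB q xq hq hxq
    by_contra hfar
    push_neg at hfar
    exact hAne ⟨xq, hfar.le, by simpa [Metric.mem_closedBall, dist_zero_right] using hxqB⟩


lemma aux_convConj_eq {d : ℕ} {h : Euc d → ℝ} {q xq : Euc d} (hxq : AuxIsMaxPt h q xq) :
    convConj h q = ⟪xq, q⟫ - h xq := by
  have hbdd : BddAbove (Set.range fun x : Euc d => ⟪x, q⟫ - h x) := by
    refine ⟨⟪xq, q⟫ - h xq, ?_⟩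
    rintro y ⟨x, rfl⟩
    exact hxq x
  exact le_antisymm (ciSup_le hxq) (le_ciSup hbdd xq)

lemma aux_hasGradient {d : ℕ} {h : Euc d → ℝ} (hpos : ∀ x, 0 ≤ h x) (h1 : H1 h) (h3 : H3 h)
    {p xp : Euc d} (hxp : AuxIsMaxPt h p xp) : HasGradientAt (convConj h) xp p := by
  have hcont := aux_cont h1
  rw [hasGradientAt_iff_isLittleO, Asymptotics.isLittleO_iff]
  intro c hc
  obtain ⟨δ, hδ0, hδ⟩ := aux_stable h1 h3 p hxp c hc
  have key : ∀ q : Euc d, ‖q - p‖ ≤ δ →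
      ‖convConj h q - convConj h p - ⟪xp, q - p⟫‖ ≤ c * ‖q - p‖ := by
    intro q hq
    obtain ⟨xq, hxq⟩ := aux_exists_max hpos hcont h3 q
    have e1 : convConj h q = ⟪xq, q⟫ - h xq := aux_convConj_eq hxq
    have e2 : convConj h p = ⟪xp, p⟫ - h xp := aux_convConj_eq hxp
    have i1 : ⟪xp, q⟫ = ⟪xp, p⟫ + ⟪xp, q - p⟫ := by rw [← inner_add_right]; congr 1; abel
    have i2 : ⟪xq, q⟫ = ⟪xq, p⟫ + ⟪xq, q - p⟫ := by rw [← inner_add_right]; congr 1; abel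
    have lower : 0 ≤ convConj h q - convConj h p - ⟪xp, q - p⟫ := by
      have := hxq xp
      rw [e1, e2]
      linarith [i1 ▸ this]
    have upper : convConj h q - convConj h p - ⟪xp, q - p⟫ ≤ ⟪xq - xp, q - p⟫ := by
      have h5 := hxp xq
      have i3 : ⟪xq - xp, q - p⟫ = ⟪xq, q - p⟫ - ⟪xp, q - p⟫ := inner_sub_left _ _ _
      rw [e1, e2, i2, i3]
      linarith
    have hnb : ⟪xq - xp, q - p⟫ ≤ c * ‖q - p‖ := by
      have hCS := real_inner_le_norm (xq - xp) (q - p)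
      have hst := hδ q xq hq hxq
      nlinarith [norm_nonneg (q - p)]
    rw [Real.norm_eq_abs, abs_of_nonneg lower]
    linarith
  filter_upwards [Metric.ball_mem_nhds p hδ0] with q hq
  exact key q (by rw [Metric.mem_ball, dist_eq_norm] at hq; exact hq.le)

lemma aux_grad_isMax {d : ℕ} {h : Euc d → ℝ} (hpos : ∀ x, 0 ≤ h x) (h1 : H1 h) (h3 : H3 h)
    (p : Euc d) : AuxIsMaxPt h p (gradient (convConj h) p) := by
  obtain ⟨xp, hxp⟩ := aux_exists_max hpos (aux_cont h1) h3 p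
  rw [(aux_hasGradient hpos h1 h3 hxp).gradient]
  exact hxp


/-- in the relabeled discrete setup with contaminating point
`z_k = u_j - ∇h*(z₀ + k v)` placed with multiplicity `m`, if for all large `k` the optimal
assignment `T_k` sends some `u_(r)` with `r ≥ ℓ+1` to `z_k`, then `‖T_k(u_j)‖ → ∞`. -/
theorem discrete_upper_part_i (d n : ℕ) (hd : 1 ≤ d) (h : Euc d → ℝ)
    (hpos : ∀ x, 0 ≤ h x) (h1 : H1 h) (h2 : H2 h) (h3 : H3 h)
    (u x : Fin n → Euc d) (hu : Function.Injective u) (hx : Function.Injective x)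
    (σn : Equiv.Perm (Fin n)) (hσn : IsOptAssign h u x σn)
    (j : Fin n) (v : Euc d) (hv : ‖v‖ = 1)
    -- relabeling `u_(i) = u (ρ i)`
    (ρ : Equiv.Perm (Fin n)) (ℓ : ℕ) (hℓ1 : 1 ≤ ℓ) (hℓn : ℓ ≤ n)
    (hlab : ∀ i : Fin n, ⟪v, u (ρ i) - u j⟫ ≤ 0 ↔ (i : ℕ) < ℓ)
    (iℓ : Fin n) (hiℓ : (iℓ : ℕ) + 1 = ℓ) (hρiℓ : ρ iℓ = j)
    (z₀ : Euc d) (m : ℕ) (hm1 : 1 ≤ m) (hmn : m ≤ n)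
    -- contaminating points
    (z : ℕ → Euc d) (hz : ∀ k : ℕ, z k = u j - gradient (convConj h) (z₀ + (k : ℝ) • v))
    -- contaminated targets: `z k` with multiplicity `m`, together with `T(u_(i))` for `i > m`
    (y : ℕ → Fin n → Euc d)
    (hy : ∀ k : ℕ, ∀ i : Fin n, y k i = if (i : ℕ) < m then z k else x (σn (ρ i)))
    -- optimal assignments for the contaminated targets
    (τ : ℕ → Equiv.Perm (Fin n))
    (hτ : ∀ k : ℕ, IsOptAssign h (fun i => u (ρ i)) (y k) (τ k))
    (r : Fin n) (hr : ℓ ≤ (r : ℕ))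
    (hev : ∃ K : ℕ, ∀ k : ℕ, K ≤ k → y k (τ k r) = z k) :
    Tendsto (fun k : ℕ => ‖y k (τ k iℓ)‖) atTop atTop := by
  classical
  have hcont := aux_cont h1
  set w : ℕ → Euc d := fun k => gradient (convConj h) (z₀ + (k : ℝ) • v) with hwdef
  have hw : ∀ k : ℕ, AuxIsMaxPt h (z₀ + (k : ℝ) • v) (w k) := fun k =>
    aux_grad_isMax hpos h1 h3 _
  obtain ⟨K, hK⟩ := hev
  have hiℓr : iℓ ≠ r := by
    intro e
    rw [e] at hiℓ
    omega
  set δv : Euc d := u (ρ r) - u j with hδdef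
  set a : ℝ := ⟪v, δv⟫ with hadef
  have ha : 0 < a := by
    have hnot : ¬ ((r : ℕ) < ℓ) := not_lt.mpr hr
    exact not_le.mp (fun hle => hnot ((hlab r).mp hle))
  have key : ∀ k : ℕ, K ≤ k →
      ⟪δv, z₀⟫ + (k : ℝ) * a + h (u j - y k (τ k iℓ)) ≤ h (u (ρ r) - y k (τ k iℓ)) := by
    intro k hk
    have hexch := hτ k (τ k * Equiv.swap iℓ r)
    simp only [Equiv.Perm.mul_apply] at hexch
    set f : Fin n → ℝ := fun i => cost h (u (ρ i)) (y k (τ k i)) with hf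
    set g : Fin n → ℝ := fun i => cost h (u (ρ i)) (y k (τ k (Equiv.swap iℓ r i))) with hg
    have hexch' : ∑ i, f i ≤ ∑ i, g i := hexch
    have hrmem : r ∈ (Finset.univ.erase iℓ) :=
      Finset.mem_erase.mpr ⟨Ne.symm hiℓr, Finset.mem_univ r⟩
    have hsum : ∀ F : Fin n → ℝ,
        ∑ i, F i = F iℓ + (F r + ∑ i ∈ (Finset.univ.erase iℓ).erase r, F i) := fun F => by
      rw [← Finset.add_sum_erase _ F (Finset.mem_univ iℓ), ← Finset.add_sum_erase _ F hrmem]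
    have heq : ∑ i ∈ (Finset.univ.erase iℓ).erase r, f i
        = ∑ i ∈ (Finset.univ.erase iℓ).erase r, g i := by
      refine Finset.sum_congr rfl fun i hi => ?_
      have hi1 : i ≠ r := (Finset.mem_erase.mp hi).1
      have hi2 : i ≠ iℓ := (Finset.mem_erase.mp (Finset.mem_erase.mp hi).2).1
      simp [hf, hg, Equiv.swap_apply_of_ne_of_ne hi2 hi1]
    have h2terms : f iℓ + f r ≤ g iℓ + g r := by
      rw [hsum f, hsum g, heq] at hexch'
      linarith
    have hzk : z k = u j - w k := hz k
    have egiℓ : g iℓ = h (w k) := by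
      have : u j - z k = w k := by rw [hzk]; abel
      simp only [hg, Equiv.swap_apply_left, hρiℓ, cost, hK k hk, this]
    have efr : f r = h (δv + w k) := by
      have : u (ρ r) - z k = δv + w k := by rw [hzk, hδdef]; abel
      simp only [hf, cost, hK k hk, this]
    have efiℓ : f iℓ = h (u j - y k (τ k iℓ)) := by
      simp only [hf, cost, hρiℓ]
    have egr : g r = h (u (ρ r) - y k (τ k iℓ)) := by
      simp only [hg, Equiv.swap_apply_right, cost]
    have hmax := hw k (δv + w k)
    have i1 : ⟪δv + w k, z₀ + (k : ℝ) • v⟫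
        = ⟪δv, z₀⟫ + (k : ℝ) * a + ⟪w k, z₀ + (k : ℝ) • v⟫ := by
      have hia : ⟪δv, v⟫ = a := by rw [hadef, real_inner_comm]
      rw [inner_add_left, inner_add_right, real_inner_smul_right, hia]
    rw [i1] at hmax
    rw [egiℓ, efr, efiℓ, egr] at h2terms
    linarith
  rw [tendsto_atTop]
  intro C
  set C' : ℝ := max C 0 with hC'
  have hC'0 : 0 ≤ C' := le_max_right _ _
  have hrad : (0:ℝ) ≤ C' + ‖u (ρ r)‖ + 1 := by positivity
  obtain ⟨x₀, _, hMx⟩ := (isCompact_closedBall (0 : Euc d) (C' + ‖u (ρ r)‖ + 1)).exists_isMaxOn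
    ⟨0, by simpa [Metric.mem_closedBall, dist_zero_right] using hrad⟩ hcont.continuousOn
  set M := h x₀ with hM
  obtain ⟨N₁, hN₁⟩ := exists_nat_gt ((M - ⟪δv, z₀⟫) / a)
  refine eventually_atTop.mpr ⟨max K N₁, fun k hk => ?_⟩
  have hkK : K ≤ k := le_trans (le_max_left _ _) hk
  have hkN : N₁ ≤ k := le_trans (le_max_right _ _) hk
  have hMlt : M < ⟪δv, z₀⟫ + (k : ℝ) * a := by
    rw [div_lt_iff₀ ha] at hN₁
    have hcast : (N₁ : ℝ) ≤ (k : ℝ) := Nat.cast_le.mpr hkN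
    nlinarith
  have hbig := key k hkK
  have hineq : M < h (u (ρ r) - y k (τ k iℓ)) :=
    lt_of_lt_of_le hMlt (by linarith [hpos (u j - y k (τ k iℓ))])
  have hout : (u (ρ r) - y k (τ k iℓ)) ∉ Metric.closedBall (0 : Euc d) (C' + ‖u (ρ r)‖ + 1) :=
    fun hm => absurd (hMx hm) (not_le.mpr hineq)
  have hfar : C' + ‖u (ρ r)‖ + 1 < ‖u (ρ r) - y k (τ k iℓ)‖ := by
    by_contra hle
    push_neg at hle
    exact hout (by simpa [Metric.mem_closedBall, dist_zero_right] using hle)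
  have htri : ‖u (ρ r) - y k (τ k iℓ)‖ ≤ ‖u (ρ r)‖ + ‖y k (τ k iℓ)‖ := norm_sub_le _ _
  calc C ≤ C' := le_max_left _ _
  _ ≤ ‖y k (τ k iℓ)‖ := by linarith


end
end

section
/- Assume the cost c(x,y) = h(x−y) satisfies (H1)–(H3). Let u_1,…,u_n ∈ ℝ^d be distinct and x_1,…,x_n ∈ ℝ^d be distinct. Fix j ∈ {1,…,n} and v ∈ S^{d−1}, and let ℓ be the number of sample points u_i lying in the halfspace {x : ⟨v, x − u_j⟩ ≤ 0} (note u_j itself is one of them). Then the finite sample breakdown point of T_{Q_n→P_n}(u_j) is at most ℓ/n. -/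
open Filter MeasureTheory Bornology Topology Set
open scoped RealInnerProductSpace ENNReal BigOperators Classical

noncomputable section

lemma exists_lower_grad {d : ℕ} (h : Euc d → ℝ) (hc : Continuous h) (h3 : H3 h)
    (v : Euc d) (t : ℝ) (ht : 0 ≤ t) :
    ∃ q : Euc d, ∀ w : Euc d, h q + t * ⟪v, w⟫ ≤ h (q + w) := by
  obtain ⟨R, hR⟩ := h3 (t * ‖v‖ + 1)
  set g : Euc d → ℝ := fun y => t * ⟪v, y⟫ - h y with hg
  have hgc : Continuous g :=
    (continuous_const.mul (continuous_const.inner continuous_id)).sub hc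
  set R₀ : ℝ := max R |g 0| with hR₀
  have key : ∀ y : Euc d, R₀ ≤ ‖y‖ → g y ≤ g 0 := by
    intro y hy
    have h1 : t * ⟪v, y⟫ ≤ t * ‖v‖ * ‖y‖ := by
      have h2 := real_inner_le_norm v y
      nlinarith [norm_nonneg y, norm_nonneg v]
    have h2 : (t * ‖v‖ + 1) * ‖y‖ ≤ h y :=
      hR y (le_trans (le_max_left _ _) hy)
    have h3' : g y ≤ -‖y‖ := by simp only [hg]; nlinarith
    have h4 : -‖y‖ ≤ -|g 0| := by
      have := le_trans (le_max_right R |g 0|) hy; linarith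
    have h5 : -|g 0| ≤ g 0 := neg_abs_le _
    linarith
  have hR₀0 : 0 ≤ R₀ := le_trans (abs_nonneg _) (le_max_right _ _)
  obtain ⟨q, hqmem, hqmax⟩ :=
    (isCompact_closedBall (0 : Euc d) R₀).exists_isMaxOn
      ⟨0, by simpa using hR₀0⟩ hgc.continuousOn
  have hglob : ∀ y, g y ≤ g q := by
    intro y
    by_cases hy : ‖y‖ ≤ R₀
    · exact hqmax (by simpa [Metric.mem_closedBall, dist_zero_right] using hy)
    · exact le_trans (key y (le_of_lt (lt_of_not_ge hy)))
        (hqmax (by simpa [Metric.mem_closedBall] using hR₀0))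
  refine ⟨q, fun w => ?_⟩
  have := hglob (q + w)
  simp only [hg, inner_add_right] at this
  linarith

/-- for any unit vector `v`, if `ℓ` is the number of sample points in the
halfspace `{x : ⟨v, x - u_j⟩ ≤ 0}`, then the finite sample breakdown point of
`T_{Q_n→P_n}(u_j)` is at most `ℓ/n`. -/
theorem finiteSampleBP_le_halfspace_count (d n : ℕ) (hd : 1 ≤ d) (h : Euc d → ℝ)
    (hpos : ∀ x, 0 ≤ h x) (h1 : H1 h) (h2 : H2 h) (h3 : H3 h)
    (u x : Fin n → Euc d) (hu : Function.Injective u) (hx : Function.Injective x)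
    (j : Fin n) (v : Euc d) (hv : ‖v‖ = 1) :
    finiteSampleBP h u x j ≤
      ((Finset.univ.filter fun i => ⟪v, u i - u j⟫ ≤ 0).card : ℝ) / n := by
  classical
  have hn : 0 < n := j.pos
  set S : Finset (Fin n) := Finset.univ.filter fun i => ⟪v, u i - u j⟫ ≤ 0 with hS
  have hjS : j ∈ S := by simp [hS]
  have hL1 : 1 ≤ S.card := Finset.card_pos.mpr ⟨j, hjS⟩
  have hLn : S.card ≤ n := by
    simpa using Finset.card_filter_le Finset.univ fun i => ⟪v, u i - u j⟫ ≤ 0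
  have hmem : S.card ∈ {ℓ : ℕ | 1 ≤ ℓ ∧ ℓ ≤ n ∧ ¬ IsBounded (fsBadSet h u x j ℓ)} := by
    refine ⟨hL1, hLn, ?_⟩
    rw [isBounded_iff_forall_norm_le]
    rintro ⟨C, hC⟩
    have hcont : Continuous h := by
      rw [← continuousOn_univ]
      exact h1.convexOn.continuousOn isOpen_univ
    have hne : (Finset.univ : Finset (Fin n × Fin n)).Nonempty := ⟨(j, j), Finset.mem_univ _⟩
    set K : ℝ := Finset.univ.sup' hne
      (fun bk : Fin n × Fin n => h (u bk.1 - x bk.2) - h (u j - x bk.2)) with hK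
    set tneed : Fin n → ℝ :=
      fun b => if 0 < ⟪v, u b - u j⟫ then (max K 0 + 1) / ⟪v, u b - u j⟫ else 0 with htneed
    set B : ℝ := |C| + ‖u j‖ + 1 with hB
    have hB1 : 0 ≤ B + 1 := by
      have := abs_nonneg C; have := norm_nonneg (u j); simp only [hB]; linarith
    obtain ⟨m, hmmem, hmmax⟩ :=
      (isCompact_closedBall (0 : Euc d) (B + 1)).exists_isMaxOn
        ⟨0, by simpa using hB1⟩ hcont.continuousOn
    set U : ℝ := h m with hU
    have hU0 : 0 ≤ U := hpos m
    set t : ℝ := max (U + 1) (Finset.univ.sup' ⟨j, Finset.mem_univ j⟩ tneed) with htdef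
    have ht0 : 0 ≤ t := le_trans (by linarith) (le_max_left _ _)
    obtain ⟨q, hq⟩ := exists_lower_grad h hcont h3 v t ht0
    have htb : ∀ b : Fin n, b ∉ S → max K 0 + 1 ≤ t * ⟪v, u b - u j⟫ := by
      intro b hb
      have hb' : 0 < ⟪v, u b - u j⟫ := by
        by_contra hcon
        exact hb (by
          rw [hS]
          exact Finset.mem_filter.mpr ⟨Finset.mem_univ b, le_of_not_gt hcon⟩)
      have h1' : tneed b ≤ t :=
        le_trans (Finset.le_sup' tneed (Finset.mem_univ b)) (le_max_right _ _)
      simp only [htneed, if_pos hb'] at h1'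
      rw [div_le_iff₀ hb'] at h1'
      linarith
    have hqnorm : B < ‖q‖ := by
      by_contra hcon
      push_neg at hcon
      have h1' : ‖q + v‖ ≤ B + 1 := le_trans (norm_add_le q v) (by rw [hv]; linarith)
      have h2' : h (q + v) ≤ U :=
        hmmax (by simpa [Metric.mem_closedBall, dist_zero_right] using h1')
      have h3' : h q + t * ⟪v, v⟫ ≤ h (q + v) := hq v
      have h4' : ⟪v, v⟫ = (1 : ℝ) := by
        rw [real_inner_self_eq_norm_sq, hv]; norm_num
      rw [h4'] at h3'
      have h5' : U + 1 ≤ t := le_max_left _ _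
      have := hpos q
      linarith
    set p : Euc d := u j - q with hp
    have hpC : C < ‖p‖ := by
      have h1' : ‖q‖ - ‖u j‖ ≤ ‖q - u j‖ := norm_sub_norm_le q (u j)
      have h2' : ‖q - u j‖ = ‖p‖ := by rw [hp, norm_sub_rev]
      have h3' : C ≤ |C| := le_abs_self C
      simp only [hB] at hqnorm
      linarith
    set x' : Fin n → Euc d := fun i => if i ∈ S then p else x i with hx'
    have hujp : u j - p = q := by rw [hp]; abel
    have hkey : ∀ b : Fin n, b ∉ S → ∀ k : Fin n,
        h (u j - p) + h (u b - x k) ≤ h (u j - x k) + h (u b - p) := by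
      intro b hb k
      have hub : u b - p = q + (u b - u j) := by rw [hp]; abel
      have h1' := hq (u b - u j)
      have h2' := htb b hb
      have h3' : h (u b - x k) - h (u j - x k) ≤ K := by
        rw [hK]
        exact Finset.le_sup'
          (fun bk : Fin n × Fin n => h (u bk.1 - x bk.2) - h (u j - x bk.2))
          (Finset.mem_univ (b, k))
      have h4' : K ≤ max K 0 := le_max_left _ _
      rw [hujp, hub]
      linarith
    obtain ⟨σ₀, -, hopt⟩ := Finset.exists_min_image (Finset.univ : Finset (Equiv.Perm (Fin n)))
      (fun τ => ∑ i, cost h (u i) (x' (τ i))) ⟨1, Finset.mem_univ 1⟩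
    have hshare : SharesAtoms x x' (n - S.card) := by
      refine ⟨Sᶜ, ?_, id, Set.injOn_id _, fun i hi => ?_⟩
      · rw [Finset.card_compl]; simp
      · simp only [hx', id]
        rw [if_neg (by simpa using hi)]
    have hmain : ∃ σ : Equiv.Perm (Fin n), IsOptAssign h u x' σ ∧ σ j ∈ S := by
      by_cases hcase : σ₀ j ∈ S
      · exact ⟨σ₀, fun τ => hopt τ (Finset.mem_univ τ), hcase⟩
      · have hPcard : (Finset.univ.filter fun i => σ₀ i ∈ S).card = S.card := by
          have himg : Finset.univ.filter (fun i => σ₀ i ∈ S) = S.image σ₀.symm := by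
            ext i
            simp only [Finset.mem_filter, Finset.mem_univ, true_and, Finset.mem_image]
            constructor
            · intro hi; exact ⟨σ₀ i, hi, by simp⟩
            · rintro ⟨a, ha, rfl⟩; simpa using ha
          rw [himg, Finset.card_image_of_injective _ σ₀.symm.injective]
        obtain ⟨b, hbP, hbS⟩ : ∃ b, σ₀ b ∈ S ∧ b ∉ S := by
          by_contra hcon
          push_neg at hcon
          have hsub : (Finset.univ.filter fun i => σ₀ i ∈ S) ⊆ S.erase j := by
            intro i hi
            simp only [Finset.mem_filter, Finset.mem_univ, true_and] at hi
            refine Finset.mem_erase.mpr ⟨?_, hcon i hi⟩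
            rintro rfl; exact hcase hi
          have hcard := Finset.card_le_card hsub
          rw [hPcard, Finset.card_erase_of_mem hjS] at hcard
          omega
        have hjb : j ≠ b := fun hEq => hbS (hEq ▸ hjS)
        set σ₁ : Equiv.Perm (Fin n) := σ₀ * Equiv.swap j b with hσ₁
        have hσ₁j : σ₁ j = σ₀ b := by
          simp [hσ₁, Equiv.Perm.mul_apply, Equiv.swap_apply_left]
        have hσ₁b : σ₁ b = σ₀ j := by
          simp [hσ₁, Equiv.Perm.mul_apply, Equiv.swap_apply_right]
        have hG : ∀ i : Fin n, i ≠ j → i ≠ b → x' (σ₁ i) = x' (σ₀ i) := by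
          intro i hij hib
          simp [hσ₁, Equiv.Perm.mul_apply, Equiv.swap_apply_of_ne_of_ne hij hib]
        have hle : ∑ i, cost h (u i) (x' (σ₁ i)) ≤ ∑ i, cost h (u i) (x' (σ₀ i)) := by
          set F : Fin n → ℝ := fun i => cost h (u i) (x' (σ₀ i)) with hF
          set G : Fin n → ℝ := fun i => cost h (u i) (x' (σ₁ i)) with hGdef
          have hbmem : b ∈ Finset.univ.erase j :=
            Finset.mem_erase.mpr ⟨fun hEq => hjb hEq.symm, Finset.mem_univ b⟩
          have e1 : ∑ i, G i = G j + (G b + ∑ i ∈ (Finset.univ.erase j).erase b, G i) := by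
            rw [Finset.add_sum_erase _ G hbmem, Finset.add_sum_erase _ G (Finset.mem_univ j)]
          have e2 : ∑ i, F i = F j + (F b + ∑ i ∈ (Finset.univ.erase j).erase b, F i) := by
            rw [Finset.add_sum_erase _ F hbmem, Finset.add_sum_erase _ F (Finset.mem_univ j)]
          have e3 : ∑ i ∈ (Finset.univ.erase j).erase b, G i =
              ∑ i ∈ (Finset.univ.erase j).erase b, F i := by
            refine Finset.sum_congr rfl fun i hi => ?_
            have hib : i ≠ b := (Finset.mem_erase.mp hi).1
            have hij : i ≠ j := (Finset.mem_erase.mp (Finset.mem_erase.mp hi).2).1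
            simp only [hGdef, hF]
            rw [hG i hij hib]
          have e4 : G j + G b ≤ F j + F b := by
            have hxj : x' (σ₀ j) = x (σ₀ j) := by simp only [hx']; rw [if_neg hcase]
            have hxb : x' (σ₀ b) = p := by simp only [hx']; rw [if_pos hbP]
            have hk := hkey b hbS (σ₀ j)
            simp only [hGdef, hF, hσ₁j, hσ₁b, cost, hxj, hxb]
            linarith
          rw [e1, e2, e3]
          linarith
        refine ⟨σ₁, fun τ => le_trans hle (hopt τ (Finset.mem_univ τ)), ?_⟩
        rw [hσ₁j]; exact hbP
    obtain ⟨σ, hσopt, hσj⟩ := hmain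
    have hyp : x' (σ j) = p := by simp only [hx']; rw [if_pos hσj]
    have hy : p ∈ fsBadSet h u x j S.card := ⟨x', σ, hshare, hσopt, hyp.symm⟩
    exact absurd (hC p hy) (not_le.mpr hpC)
  have hsInf := Nat.sInf_le hmem
  unfold finiteSampleBP
  have hn' : (0 : ℝ) < n := by exact_mod_cast hn
  rw [div_le_div_iff_of_pos_right hn']
  exact_mod_cast hsInf


end
end

section
/- Assume the cost c(x,y) = h(x−y) satisfies (H1)–(H3). Let u_1,…,u_n ∈ ℝ^d be distinct and x_1,…,x_n ∈ ℝ^d be distinct, with Q_n the empirical measure of u_1,…,u_n. Then for every j ∈ {1,…,n}, the finite sample breakdown point of T_{Q_n→P_n}(u_j) is at most TD(u_j;Q_n). -/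
open Filter MeasureTheory Bornology Topology Set
open scoped RealInnerProductSpace ENNReal BigOperators Classical

noncomputable section

/-- Key analytic lemma: for a nonnegative convex superlinear function `h`, for any
constant `C` and radius `R`, there is a point `q` with `‖q‖ > R` such that moving from `q`
by any vector `e ∈ E` pointing strictly into the halfspace `{⟪v,·⟫ > 0}` increases `h`
by more than `C`. -/
lemma exists_far_growth_point {d : ℕ} (h : Euc d → ℝ) (hpos : ∀ x, 0 ≤ h x)
    (hconv : ConvexOn ℝ Set.univ h) (h3 : H3 h)
    (v : Euc d) (hv : ‖v‖ = 1) (E : Finset (Euc d))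
    (hE : ∀ e ∈ E, 0 < ⟪v, e⟫) (C R : ℝ) :
    ∃ q : Euc d, R < ‖q‖ ∧ ∀ e ∈ E, h q + C < h (q + e) := by
  have hcont : Continuous h := by
    have h1 := hconv.continuousOn isOpen_univ
    exact continuousOn_univ.1 h1
  -- the minimal inner product over E (capped by 1)
  obtain ⟨δ, hδpos, hδle⟩ : ∃ δ : ℝ, 0 < δ ∧ ∀ e ∈ E, δ ≤ ⟪v, e⟫ := by
    have hDne : (insert (1 : ℝ) (E.image fun e => ⟪v, e⟫)).Nonempty :=
      ⟨1, Finset.mem_insert_self _ _⟩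
    refine ⟨(insert (1 : ℝ) (E.image fun e => ⟪v, e⟫)).min' hDne, ?_, fun e he =>
      Finset.min'_le (insert (1 : ℝ) (E.image fun e' => ⟪v, e'⟫)) ⟪v, e⟫
        (Finset.mem_insert_of_mem (Finset.mem_image_of_mem _ he))⟩
    have hmem := Finset.min'_mem _ hDne
    rw [Finset.mem_insert] at hmem
    rcases hmem with h1 | h1
    · rw [h1]; norm_num
    · obtain ⟨e, he, hee⟩ := Finset.mem_image.1 h1
      rw [← hee]; exact hE e he
  obtain ⟨γ, hγpos, hδγ⟩ : ∃ γ : ℝ, 0 < γ ∧ δ * γ = 2 * (|C| + 1) + δ := by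
    refine ⟨2 * (|C| + 1) / δ + 1, ?_, ?_⟩
    · have h1 : 0 ≤ 2 * (|C| + 1) / δ := by positivity
      linarith
    · field_simp
  have hCgap : C < δ * γ / 2 := by
    have h1 : C ≤ |C| := le_abs_self C
    linarith
  set h₀ : ℝ := h 0 with hh₀def
  have hh₀ : 0 ≤ h₀ := hpos 0
  obtain ⟨R₁, hR₁⟩ := h3 γ
  set p₀ : Euc d := (max R 0 + 1) • v with hp₀
  set c : ℝ := max (max (2 * h₀ + 1) (γ * max R₁ 0 + 1)) (h p₀) with hcdef
  have hc1 : 2 * h₀ + 1 ≤ c := le_trans (le_max_left _ _) (le_max_left _ _)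
  have hc2 : γ * max R₁ 0 + 1 ≤ c := le_trans (le_max_right _ _) (le_max_left _ _)
  have hc3 : h p₀ ≤ c := le_max_right _ _
  have hc0 : 0 < c := by linarith
  have hch₀ : h₀ < c := by linarith
  have h2h₀ : 2 * h₀ ≤ c := by linarith
  clear_value h₀ c
  set L : Set (Euc d) := {y : Euc d | h y ≤ c} with hLdef
  have hLbound : ∀ y ∈ L, ‖y‖ ≤ c / γ := by
    intro y hy
    rcases le_or_gt R₁ ‖y‖ with h1 | h1
    · have := hR₁ y h1
      have hyc : γ * ‖y‖ ≤ c := le_trans this hy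
      rw [le_div_iff₀ hγpos, mul_comm]; exact hyc
    · have h2 : ‖y‖ ≤ max R₁ 0 := le_trans h1.le (le_max_left _ _)
      have h3' : γ * max R₁ 0 ≤ c := by linarith
      have h4 : max R₁ 0 ≤ c / γ := by
        rw [le_div_iff₀ hγpos, mul_comm]; exact h3'
      linarith
  have hLclosed : IsClosed L := isClosed_le hcont continuous_const
  have hLbdd : IsBounded L := isBounded_iff_forall_norm_le.2 ⟨c / γ, hLbound⟩
  have hLcomp : IsCompact L := Metric.isCompact_of_isClosed_isBounded hLclosed hLbdd
  have hL0 : (0 : Euc d) ∈ L := by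
    simp only [hLdef, Set.mem_setOf_eq]; linarith
  have hvcont : Continuous fun y : Euc d => ⟪v, y⟫ :=
    continuous_const.inner continuous_id
  obtain ⟨q, hqL, hqmax⟩ := hLcomp.exists_isMaxOn ⟨0, hL0⟩ hvcont.continuousOn
  have hqmax' : ∀ y ∈ L, ⟪v, y⟫ ≤ ⟪v, q⟫ := fun y hy => hqmax hy
  have hp₀L : p₀ ∈ L := hc3
  have hvp₀ : ⟪v, p₀⟫ = max R 0 + 1 := by
    rw [hp₀, real_inner_smul_right, real_inner_self_eq_norm_sq, hv]
    ring
  have hqlow : max R 0 + 1 ≤ ⟪v, q⟫ := by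
    have := hqmax' p₀ hp₀L
    rwa [hvp₀] at this
  have hqnorm : R < ‖q‖ := by
    have h1 : ⟪v, q⟫ ≤ ‖v‖ * ‖q‖ := real_inner_le_norm v q
    rw [hv, one_mul] at h1
    have h2 : R ≤ max R 0 := le_max_left _ _
    linarith
  refine ⟨q, hqnorm, fun e he => ?_⟩
  have hδe : δ ≤ ⟪v, e⟫ := hδle e he
  set w : Euc d := q + e with hw
  have hvw : ⟪v, w⟫ = ⟪v, q⟫ + ⟪v, e⟫ := inner_add_right v q e
  have hAc : c < h w := by
    by_contra hcon
    push_neg at hcon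
    have : ⟪v, w⟫ ≤ ⟪v, q⟫ := hqmax' w hcon
    rw [hvw] at this
    linarith
  -- intermediate value along segment from 0 to w
  have hφcont : Continuous fun s : ℝ => h (s • w) :=
    hcont.comp (continuous_id.smul continuous_const)
  have hIVT := intermediate_value_Icc (by norm_num : (0:ℝ) ≤ 1) hφcont.continuousOn
  have hcmem : c ∈ Set.Icc ((fun s : ℝ => h (s • w)) 0) ((fun s : ℝ => h (s • w)) 1) := by
    constructor
    · simp only [zero_smul]; rw [← hh₀def]; exact hch₀.le
    · simp only [one_smul]; exact hAc.le
  obtain ⟨s, hs01, hsc⟩ := hIVT hcmem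
  have hs0 : 0 ≤ s := hs01.1
  have hs1 : s ≤ 1 := hs01.2
  have hspos : 0 < s := by
    rcases hs0.lt_or_eq with h1 | h1
    · exact h1
    · exfalso
      rw [← h1] at hsc
      simp only [zero_smul] at hsc
      rw [← hh₀def] at hsc
      linarith
  have hslt : s < 1 := by
    rcases hs1.lt_or_eq with h1 | h1
    · exact h1
    · exfalso
      rw [h1] at hsc
      simp only [one_smul] at hsc
      linarith
  set m : Euc d := s • w with hm
  have hmc : h m = c := hsc
  have hmL : m ∈ L := le_of_eq hmc
  have hwnorm : 0 < ‖w‖ := by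
    rcases eq_or_ne w 0 with h1 | h1
    · exfalso; rw [h1] at hAc; rw [hh₀def] at hch₀; linarith [hAc, hch₀]
    · exact norm_pos_iff.2 h1
  set W : ℝ := ‖w‖ with hW
  have hmnorm : ‖m‖ = s * W := by
    rw [hm, norm_smul, Real.norm_eq_abs, abs_of_pos hspos, hW]
  have f3 : s * W ≤ c / γ := by
    rw [← hmnorm]; exact hLbound m hmL
  have f2 : δ ≤ (1 - s) * W := by
    have h1 : ⟪v, m⟫ ≤ ⟪v, q⟫ := hqmax' m hmL
    have h2 : w - m = (1 - s) • w := by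
      rw [hm, hw]; rw [sub_smul, one_smul]
    have h3 : ⟪v, w - m⟫ = ⟪v, w⟫ - ⟪v, m⟫ := inner_sub_right v w m
    have h4 : ⟪v, (1 - s) • w⟫ = (1 - s) * ⟪v, w⟫ := real_inner_smul_right v w (1 - s)
    have h5 : ⟪v, w⟫ ≤ ‖v‖ * ‖w‖ := real_inner_le_norm v w
    rw [hv, one_mul] at h5
    have h6 : (1 - s) * ⟪v, w⟫ ≤ (1 - s) * W := by
      apply mul_le_mul_of_nonneg_left _ (by linarith)
      rw [hW]; exact h5
    have h7 : δ ≤ ⟪v, w⟫ - ⟪v, m⟫ := by rw [hvw]; linarith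
    calc δ ≤ ⟪v, w⟫ - ⟪v, m⟫ := h7
    _ = ⟪v, w - m⟫ := h3.symm
    _ = (1 - s) * ⟪v, w⟫ := by rw [h2, h4]
    _ ≤ (1 - s) * W := h6
  have f1 : c ≤ (1 - s) * h₀ + s * h w := by
    have := hconv.2 (Set.mem_univ (0 : Euc d)) (Set.mem_univ w)
      (by linarith : (0:ℝ) ≤ 1 - s) hspos.le (by ring)
    rw [smul_zero, zero_add, smul_eq_mul, smul_eq_mul, ← hh₀def] at this
    rw [← hmc, hm]
    exact this
  -- now combine
  set A : ℝ := h w with hA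
  clear_value A
  have s1 : (1 - s) * (c - h₀) ≤ s * (A - c) := by nlinarith [f1]
  have s2 : ((1 - s) * (c - h₀)) * W ≤ (s * (A - c)) * W :=
    mul_le_mul_of_nonneg_right s1 (by linarith)
  have s2' : δ * (c - h₀) ≤ ((1 - s) * W) * (c - h₀) :=
    mul_le_mul_of_nonneg_right f2 (by linarith)
  have s4 : (s * W) * (A - c) ≤ (c / γ) * (A - c) :=
    mul_le_mul_of_nonneg_right f3 (by linarith)
  have s5 : δ * (c - h₀) ≤ (c / γ) * (A - c) := by
    calc δ * (c - h₀) ≤ ((1 - s) * W) * (c - h₀) := s2'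
    _ = ((1 - s) * (c - h₀)) * W := by ring
    _ ≤ (s * (A - c)) * W := s2
    _ = (s * W) * (A - c) := by ring
    _ ≤ (c / γ) * (A - c) := s4
  have s6 : δ * (c / 2) ≤ δ * (c - h₀) :=
    mul_le_mul_of_nonneg_left (by linarith) hδpos.le
  have s7 : δ * (c / 2) ≤ (c / γ) * (A - c) := le_trans s6 s5
  have s8 : δ * γ / 2 ≤ A - c := by
    have hγne : γ ≠ 0 := ne_of_gt hγpos
    have h1 : γ * (δ * (c / 2)) ≤ γ * ((c / γ) * (A - c)) :=
      mul_le_mul_of_nonneg_left s7 hγpos.le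
    have h2 : γ * ((c / γ) * (A - c)) = c * (A - c) := by field_simp
    rw [h2] at h1
    have h3 : c * (δ * γ / 2) ≤ c * (A - c) := by
      calc c * (δ * γ / 2) = γ * (δ * (c / 2)) := by ring
      _ ≤ c * (A - c) := h1
    exact le_of_mul_le_mul_left h3 hc0
  have hqc : h q ≤ c := hqL
  have : h q + C < c + δ * γ / 2 := by linarith
  linarith

/-- the finite sample breakdown point of `T_{Q_n→P_n}(u_j)` is at most
`TD(u_j;Q_n)`. -/
theorem finiteSampleBP_le_tukeyDepth (d n : ℕ) (hd : 1 ≤ d) (h : Euc d → ℝ)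
    (hpos : ∀ x, 0 ≤ h x) (h1 : H1 h) (h2 : H2 h) (h3 : H3 h)
    (u x : Fin n → Euc d) (hu : Function.Injective u) (hx : Function.Injective x)
    (j : Fin n) :
    finiteSampleBP h u x j ≤ empTD u (u j) := by
  have hn : 0 < n := j.pos
  have hnR : (0:ℝ) < n := by exact_mod_cast hn
  have hsphere : Nonempty {v : Euc d // ‖v‖ = 1} := by
    refine ⟨⟨EuclideanSpace.single (⟨0, hd⟩ : Fin d) (1:ℝ), ?_⟩⟩
    rw [EuclideanSpace.norm_single]; norm_num
  unfold empTD
  refine le_ciInf fun v => ?_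
  set Bf : Finset (Fin n) := Finset.univ.filter (fun i => ⟪(v : Euc d), u i - u j⟫ ≤ 0)
    with hBf
  set k : ℕ := Bf.card with hk
  have hjB : j ∈ Bf := by
    rw [hBf, Finset.mem_filter]
    refine ⟨Finset.mem_univ _, ?_⟩
    rw [sub_self, inner_zero_right]
  have hk1 : 1 ≤ k := Finset.card_pos.2 ⟨j, hjB⟩
  have hkn : k ≤ n := by
    have h5 := Finset.card_le_univ Bf
    rw [Fintype.card_fin] at h5
    exact h5
  -- the main unboundedness claim
  have main : ¬ IsBounded (fsBadSet h u x j k) := by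
    intro hb
    obtain ⟨Cb, hCb⟩ := isBounded_iff_forall_norm_le.1 hb
    set C : ℝ := ∑ a : Fin n, ∑ i : Fin n, h (u a - x i) with hC
    have hCbound : ∀ a i : Fin n, h (u a - x i) ≤ C := by
      intro a i
      have h1 : h (u a - x i) ≤ ∑ i' : Fin n, h (u a - x i') :=
        Finset.single_le_sum (f := fun i' => h (u a - x i'))
          (fun i' _ => hpos _) (Finset.mem_univ i)
      have h2 : (∑ i' : Fin n, h (u a - x i')) ≤ C :=
        Finset.single_le_sum (f := fun a' => ∑ i' : Fin n, h (u a' - x i'))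
          (fun a' _ => Finset.sum_nonneg fun i' _ => hpos _) (Finset.mem_univ a)
      linarith
    set E : Finset (Euc d) :=
      (Finset.univ.filter (fun a : Fin n => a ∉ Bf)).image (fun a => u a - u j) with hE
    have hEpos : ∀ e ∈ E, 0 < ⟪(v : Euc d), e⟫ := by
      intro e he
      rw [hE, Finset.mem_image] at he
      obtain ⟨a, ha, rfl⟩ := he
      rw [Finset.mem_filter] at ha
      have := ha.2
      rw [hBf, Finset.mem_filter] at this
      push_neg at this
      exact this (Finset.mem_univ a)
    obtain ⟨q, hqn, hq⟩ := exists_far_growth_point h hpos h1.convexOn h3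
      (v : Euc d) v.2 E hEpos C (Cb + ‖u j‖)
    set Y : Euc d := u j - q with hY
    set x' : Fin n → Euc d := fun i => if i ∈ Bf then Y else x i with hx'
    -- an optimal assignment exists
    obtain ⟨σ, _, hσmin⟩ := Finset.exists_min_image (Finset.univ : Finset (Equiv.Perm (Fin n)))
      (fun τ => ∑ i, cost h (u i) (x' (τ i))) Finset.univ_nonempty
    have hopt : IsOptAssign h u x' σ := fun τ => hσmin τ (Finset.mem_univ τ)
    -- every optimal assignment sends j to Y
    have hσj : σ j ∈ Bf := by
      by_contra hnot
      set A : Finset (Fin n) := Finset.univ.filter (fun i => σ i ∈ Bf) with hA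
      have hAcard : A.card = k := by
        rw [hk]
        apply Finset.card_bij (fun i _ => σ i)
        · intro i hi
          rw [hA, Finset.mem_filter] at hi
          exact hi.2
        · intro i₁ h₁ i₂ h₂ hEq
          exact σ.injective hEq
        · intro b hb
          exact ⟨σ.symm b, by
            rw [hA, Finset.mem_filter]
            exact ⟨Finset.mem_univ _, by rwa [Equiv.apply_symm_apply]⟩,
            σ.apply_symm_apply b⟩
      have hjA : j ∉ A := by
        rw [hA, Finset.mem_filter]
        push_neg
        intro _
        exact hnot
      have hex : ∃ a ∈ A, a ∉ Bf := by
        by_contra hcon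
        push_neg at hcon
        have hsub : A ⊆ Bf := hcon
        have : A = Bf := Finset.eq_of_subset_of_card_le hsub (by rw [hAcard])
        rw [← this] at hjB
        exact hjA hjB
      obtain ⟨a, haA, haB⟩ := hex
      have hane : a ≠ j := fun hEq => hjA (hEq ▸ haA)
      have hσaB : σ a ∈ Bf := by
        rw [hA, Finset.mem_filter] at haA
        exact haA.2
      -- the swapped permutation
      set τ : Equiv.Perm (Fin n) := σ * Equiv.swap j a with hτ
      have hτj : τ j = σ a := by
        rw [hτ, Equiv.Perm.mul_apply, Equiv.swap_apply_left]
      have hτa : τ a = σ j := by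
        rw [hτ, Equiv.Perm.mul_apply, Equiv.swap_apply_right]
      have hτi : ∀ i : Fin n, i ≠ j → i ≠ a → τ i = σ i := by
        intro i hij hia
        rw [hτ, Equiv.Perm.mul_apply, Equiv.swap_apply_of_ne_of_ne hij hia]
      -- compare costs
      set G : Fin n → ℝ := fun i => cost h (u i) (x' (τ i)) with hG
      set G' : Fin n → ℝ := fun i => cost h (u i) (x' (σ i)) with hG'
      have hsplit : ∀ g : Fin n → ℝ,
          ∑ i, g i = g j + g a + ∑ i ∈ (Finset.univ.erase j).erase a, g i := by
        intro g
        have e1 : ∑ i ∈ Finset.univ.erase j, g i + g j = ∑ i, g i :=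
          Finset.sum_erase_add _ _ (Finset.mem_univ j)
        have e2 : ∑ i ∈ (Finset.univ.erase j).erase a, g i + g a
            = ∑ i ∈ Finset.univ.erase j, g i :=
          Finset.sum_erase_add _ _ (Finset.mem_erase.2 ⟨hane, Finset.mem_univ a⟩)
        linarith
      have hsame : ∑ i ∈ (Finset.univ.erase j).erase a, G i
          = ∑ i ∈ (Finset.univ.erase j).erase a, G' i := by
        apply Finset.sum_congr rfl
        intro i hi
        rw [Finset.mem_erase] at hi
        obtain ⟨hia, hi'⟩ := hi
        rw [Finset.mem_erase] at hi'
        rw [hG, hG']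
        simp only
        rw [hτi i hi'.1 hia]
      -- the key strict inequality on the two swapped terms
      have hxa : x' (σ a) = Y := by simp only [hx']; rw [if_pos hσaB]
      have hxj : x' (σ j) = x (σ j) := by simp only [hx']; rw [if_neg hnot]
      have heE : (u a - u j) ∈ E := by
        rw [hE, Finset.mem_image]
        exact ⟨a, Finset.mem_filter.2 ⟨Finset.mem_univ a, haB⟩, rfl⟩
      have hkey := hq (u a - u j) heE
      have hq1 : u j - Y = q := by rw [hY]; abel
      have hq2 : u a - Y = q + (u a - u j) := by rw [hY]; abel
      have hGj : G j = h q := by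
        simp only [hG]; rw [hτj, hxa, cost, hq1]
      have hGa : G a = h (u a - x (σ j)) := by
        simp only [hG]; rw [hτa, hxj, cost]
      have hG'j : G' j = h (u j - x (σ j)) := by
        simp only [hG']; rw [hxj, cost]
      have hG'a : G' a = h (q + (u a - u j)) := by
        simp only [hG']; rw [hxa, cost, hq2]
      have hlt : G j + G a < G' j + G' a := by
        rw [hGj, hGa, hG'j, hG'a]
        have b1 : h (u a - x (σ j)) ≤ C := hCbound a (σ j)
        have b2 : 0 ≤ h (u j - x (σ j)) := hpos _
        linarith
      have hFlt : ∑ i, G i < ∑ i, G' i := by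
        rw [hsplit G, hsplit G', hsame]
        linarith
      have hFle : ∑ i, G' i ≤ ∑ i, G i := hopt τ
      linarith
    -- now produce the far element of fsBadSet
    have hmem : x' (σ j) ∈ fsBadSet h u x j k := by
      refine ⟨x', σ, ?_, hopt, rfl⟩
      refine ⟨Bfᶜ, ?_, id, Set.injOn_id _, ?_⟩
      · rw [Finset.card_compl, Fintype.card_fin]
      · intro i hi
        rw [Finset.mem_compl] at hi
        simp only [hx', id]
        rw [if_neg hi]
    have hval : x' (σ j) = Y := by simp only [hx']; rw [if_pos hσj]
    have hbig : Cb < ‖x' (σ j)‖ := by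
      rw [hval, hY]
      have h1 : ‖q‖ - ‖u j‖ ≤ ‖u j - q‖ := by
        have := norm_sub_norm_le q (u j)
        rw [norm_sub_rev] at this
        linarith
      linarith
    have := hCb _ hmem
    linarith
  have hsinf : sInf {ℓ : ℕ | 1 ≤ ℓ ∧ ℓ ≤ n ∧ ¬ IsBounded (fsBadSet h u x j ℓ)} ≤ k :=
    Nat.sInf_le ⟨hk1, hkn, main⟩
  unfold finiteSampleBP
  gcongr


end
end
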